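/- arXiv:2311.02245 — 3 statements merged into one kernel-verified Lean document; each statement's English description precedes it below -/
import Mathlib

section
/- For every positive integer q and every natural number n, there is a bijection between the set of noncrossing partitions of {1,…,2qn} all of whose blocks have exactly 2q elements, and the set of pairs (P1, P2) where P1 is a noncrossing partition of {1,…,qn} all of whose blocks have exactly q elements, P2 is a noncrossing partition of {1,…,qn}, and P1 refines P2. In particular these two sets have the same cardinality. -/
/-- A finpartition of a finite set of naturals is noncrossing (planar) if there are no
elements `a < b < c < d` with `a, c` in one block and `b, d` in a different block. -/
def IsNoncrossing {s : Finset ℕ} (P : Finpartition s) : Prop :=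
  ∀ a b c d : ℕ, a < b → b < c → c < d →
    ∀ B₁ ∈ P.parts, ∀ B₂ ∈ P.parts,
      a ∈ B₁ → c ∈ B₁ → b ∈ B₂ → d ∈ B₂ → B₁ = B₂

/-- `P` refines `Q` if every block of `P` is contained in a block of `Q`. -/
def Refines {s : Finset ℕ} (P Q : Finpartition s) : Prop :=
  ∀ B ∈ P.parts, ∃ C ∈ Q.parts, B ⊆ C

namespace NCbij

open Finset

noncomputable section
open scoped Classical

/-! ### Generic constructor for finpartitions from a class function -/

def ofClassFun (s : Finset ℕ) (c : ℕ → Finset ℕ) (hmem : ∀ a ∈ s, a ∈ c a)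
    (hsub : ∀ a ∈ s, c a ⊆ s) (heq : ∀ a ∈ s, ∀ b ∈ s, a ∈ c b → c a = c b) :
    Finpartition s where
  parts := s.image c
  supIndep := by
    rw [Finset.supIndep_iff_pairwiseDisjoint]
    rintro t ht u hu htu
    simp only [coe_image, Set.mem_image, mem_coe] at ht hu
    obtain ⟨x, hx, rfl⟩ := ht
    obtain ⟨y, hy, rfl⟩ := hu
    refine Finset.disjoint_left.2 fun z hz1 hz2 => htu ?_
    have hzs := hsub x hx hz1
    rw [← heq z hzs x hx hz1, ← heq z hzs y hy hz2]
  sup_parts := by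
    apply le_antisymm
    · rw [Finset.sup_le_iff]
      rintro t ht
      obtain ⟨x, hx, rfl⟩ := mem_image.1 ht
      exact hsub x hx
    · intro z hz
      rw [Finset.mem_sup]
      exact ⟨c z, mem_image_of_mem c hz, hmem z hz⟩
  bot_notMem := by
    simp only [bot_eq_empty, mem_image]
    rintro ⟨x, hx, hempty⟩
    rw [Finset.eq_empty_iff_forall_notMem] at hempty
    exact hempty x (hmem x hx)

theorem part_ofClassFun (s : Finset ℕ) (c : ℕ → Finset ℕ) (hmem) (hsub) (heq) {a : ℕ}
    (ha : a ∈ s) : (ofClassFun s c hmem hsub heq).part a = c a :=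
  Finpartition.part_eq_of_mem _ (mem_image_of_mem c ha) (hmem a ha)

theorem parts_ofClassFun (s : Finset ℕ) (c : ℕ → Finset ℕ) (hmem) (hsub) (heq) :
    (ofClassFun s c hmem hsub heq).parts = s.image c := rfl

theorem parts_eq_image_part {s : Finset ℕ} (P : Finpartition s) :
    P.parts = s.image P.part := by
  ext t
  constructor
  · intro ht
    obtain ⟨x, hx, hxt⟩ := P.part_surjOn ht
    exact mem_image.2 ⟨x, hx, hxt⟩
  · intro ht
    obtain ⟨x, hx, rfl⟩ := mem_image.1 ht
    exact P.part_mem.2 hx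

/-! ### The cyclic predecessor within a block of a partition -/

variable {m : ℕ}

/-- cyclic predecessor of `i` inside the block of `Q` containing `i`. -/
def pred (Q : Finpartition (Icc 1 m)) (i : ℕ) : ℕ :=
  if h : ((Q.part i).filter (· < i)).Nonempty then ((Q.part i).filter (· < i)).max' h
  else if h2 : (Q.part i).Nonempty then (Q.part i).max' h2 else i

theorem pred_mem (Q : Finpartition (Icc 1 m)) {i : ℕ} (hi : i ∈ Icc 1 m) :
    pred Q i ∈ Q.part i := by
  unfold pred
  split_ifs with h h2
  · exact mem_of_mem_filter _ (((Q.part i).filter (· < i)).max'_mem h)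
  · exact (Q.part i).max'_mem h2
  · exact absurd ⟨i, Q.mem_part hi⟩ h2

theorem pred_spec_lt (Q : Finpartition (Icc 1 m)) {i : ℕ}
    (h : ((Q.part i).filter (· < i)).Nonempty) :
    pred Q i < i ∧ ∀ k ∈ Q.part i, k < i → k ≤ pred Q i := by
  unfold pred
  rw [dif_pos h]
  constructor
  · exact (mem_filter.1 (((Q.part i).filter (· < i)).max'_mem h)).2
  · intro k hk hki
    exact Finset.le_max' ((Q.part i).filter (· < i)) k (mem_filter.2 ⟨hk, hki⟩)

theorem pred_spec_wrap (Q : Finpartition (Icc 1 m)) {i : ℕ} (hi : i ∈ Icc 1 m)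
    (h : ¬ ((Q.part i).filter (· < i)).Nonempty) :
    (∀ k ∈ Q.part i, i ≤ k) ∧ ∀ k ∈ Q.part i, k ≤ pred Q i := by
  have h2 : (Q.part i).Nonempty := ⟨i, Q.mem_part hi⟩
  constructor
  · intro k hk
    by_contra hlt
    exact h ⟨k, mem_filter.2 ⟨hk, by omega⟩⟩
  · intro k hk
    unfold pred
    rw [dif_neg h, dif_pos h2]
    exact Finset.le_max' _ k hk

theorem pred_inj (Q : Finpartition (Icc 1 m)) {i j : ℕ} (hi : i ∈ Icc 1 m) (hj : j ∈ Icc 1 m)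
    (hpart : Q.part i = Q.part j) (h : pred Q i = pred Q j) : i = j := by
  have key : ∀ a b : ℕ, a ∈ Icc 1 m → b ∈ Icc 1 m → Q.part a = Q.part b →
      pred Q a = pred Q b → a < b → False := by
    intro a b ha hb hab hpr hlt
    have hain : a ∈ Q.part b := hab ▸ Q.mem_part ha
    have hbf : ((Q.part b).filter (· < b)).Nonempty := ⟨a, mem_filter.2 ⟨hain, hlt⟩⟩
    obtain ⟨hblt, hbmax⟩ := pred_spec_lt Q hbf
    have hapb : a ≤ pred Q b := hbmax a hain hlt
    by_cases haf : ((Q.part a).filter (· < a)).Nonempty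
    · obtain ⟨halt, _⟩ := pred_spec_lt Q haf
      omega
    · obtain ⟨_, hamax⟩ := pred_spec_wrap Q ha haf
      have hbin : b ∈ Q.part a := hab ▸ Q.mem_part hb
      have := hamax b hbin
      omega
  rcases Nat.lt_trichotomy i j with hlt | heq | hgt
  · exact absurd (key i j hi hj hpart h hlt) not_false
  · exact heq
  · exact absurd (key j i hj hi hpart.symm h.symm hgt) not_false

theorem pred_image (Q : Finpartition (Icc 1 m)) {C : Finset ℕ} (hC : C ∈ Q.parts) :
    C.image (pred Q) = C := by
  have hCsub : C ⊆ Icc 1 m := Q.le hC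
  have hpartC : ∀ i ∈ C, Q.part i = C := fun i hi => Q.part_eq_of_mem hC hi
  have hsub : C.image (pred Q) ⊆ C := by
    intro x hx
    obtain ⟨i, hi, rfl⟩ := mem_image.1 hx
    have := pred_mem Q (hCsub hi)
    rwa [hpartC i hi] at this
  refine eq_of_subset_of_card_le hsub (le_of_eq ?_)
  refine (Finset.card_image_of_injOn ?_).symm
  intro a ha b hb hab
  exact pred_inj Q (hCsub ha) (hCsub hb) ((hpartC a ha).trans (hpartC b hb).symm) hab

theorem card_filter_pred_mem (Q : Finpartition (Icc 1 m)) {B C : Finset ℕ}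
    (hC : C ∈ Q.parts) (hBC : B ⊆ C) :
    ((Icc 1 m).filter (fun i => pred Q i ∈ B)).card = B.card := by
  have hCsub : C ⊆ Icc 1 m := Q.le hC
  have hpartC : ∀ i ∈ C, Q.part i = C := fun i hi => Q.part_eq_of_mem hC hi
  refine Finset.card_bij (fun i _ => pred Q i) ?_ ?_ ?_
  · intro a ha
    exact (mem_filter.1 ha).2
  · intro a ha b hb hab
    have ha' := mem_filter.1 ha
    have hb' := mem_filter.1 hb
    have hpa : Q.part a = C :=
      Q.eq_of_mem_parts (Q.part_mem.2 ha'.1) hC (pred_mem Q ha'.1) (hBC ha'.2)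
    have hpb : Q.part b = C :=
      Q.eq_of_mem_parts (Q.part_mem.2 hb'.1) hC (pred_mem Q hb'.1) (hBC hb'.2)
    exact pred_inj Q ha'.1 hb'.1 (hpa.trans hpb.symm) hab
  · intro b hb
    have hbC : b ∈ C := hBC hb
    have : b ∈ C.image (pred Q) := (pred_image Q hC).symm ▸ hbC
    obtain ⟨i, hi, hib⟩ := mem_image.1 this
    exact ⟨i, mem_filter.2 ⟨hCsub hi, hib ▸ hb⟩, hib⟩

/-! ### The doubling map Ψ -/

def fodd (Q : Finpartition (Icc 1 m)) (B : Finset ℕ) : Finset ℕ :=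
  B.image (fun b => 2 * b) ∪
    ((Icc 1 m).filter (fun i => pred Q i ∈ B)).image (fun i => 2 * i - 1)

theorem mem_fodd_even (Q : Finpartition (Icc 1 m)) (B : Finset ℕ) (j : ℕ) :
    2 * j ∈ fodd Q B ↔ j ∈ B := by
  unfold fodd
  simp only [mem_union, mem_image, mem_filter, mem_Icc]
  constructor
  · rintro (⟨b, hb, hbe⟩ | ⟨i, ⟨⟨hi1, _⟩, _⟩, hie⟩)
    · have : b = j := by omega
      rwa [← this]
    · omega
  · intro hj
    exact Or.inl ⟨j, hj, rfl⟩

theorem mem_fodd_odd (Q : Finpartition (Icc 1 m)) (B : Finset ℕ) {j : ℕ} (hj : 1 ≤ j) :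
    2 * j - 1 ∈ fodd Q B ↔ (j ∈ Icc 1 m ∧ pred Q j ∈ B) := by
  unfold fodd
  simp only [mem_union, mem_image, mem_filter, mem_Icc]
  constructor
  · rintro (⟨b, hb, hbe⟩ | ⟨i, ⟨⟨hi1, hi2⟩, hpi⟩, hie⟩)
    · omega
    · have : i = j := by omega
      subst this
      exact ⟨⟨hi1, hi2⟩, hpi⟩
  · rintro ⟨⟨hj1, hj2⟩, hpj⟩
    exact Or.inr ⟨j, ⟨⟨hj1, hj2⟩, hpj⟩, rfl⟩

theorem fodd_subset (Q : Finpartition (Icc 1 m)) {B : Finset ℕ} (hB : B ⊆ Icc 1 m) :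
    fodd Q B ⊆ Icc 1 (2 * m) := by
  intro x hx
  unfold fodd at hx
  simp only [mem_union, mem_image, mem_filter, mem_Icc] at hx ⊢
  rcases hx with ⟨b, hb, hbe⟩ | ⟨i, ⟨⟨hi1, hi2⟩, _⟩, hie⟩
  · have := hB hb
    rw [mem_Icc] at this
    omega
  · omega

theorem point_cases {Q : Finpartition (Icc 1 m)} {B : Finset ℕ} {p : ℕ} (hp : p ∈ fodd Q B) :
    (∃ b ∈ B, p = 2 * b) ∨ ∃ i, i ∈ Icc 1 m ∧ pred Q i ∈ B ∧ p = 2 * i - 1 := by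
  unfold fodd at hp
  simp only [mem_union, mem_image, mem_filter] at hp
  rcases hp with ⟨b, hb, hbe⟩ | ⟨i, ⟨hi, hpi⟩, hie⟩
  · exact Or.inl ⟨b, hb, hbe.symm⟩
  · exact Or.inr ⟨i, hi, hpi, hie.symm⟩

/-- the class function for `Ψ`. -/
def psiCls (P1 Q : Finpartition (Icc 1 m)) (x : ℕ) : Finset ℕ :=
  if Even x then fodd Q (P1.part (x / 2)) else fodd Q (P1.part (pred Q ((x + 1) / 2)))

theorem psiCls_even (P1 Q : Finpartition (Icc 1 m)) (i : ℕ) :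
    psiCls P1 Q (2 * i) = fodd Q (P1.part i) := by
  unfold psiCls
  rw [if_pos ⟨i, by omega⟩]
  have h2 : 2 * i / 2 = i := by omega
  rw [h2]

theorem psiCls_odd (P1 Q : Finpartition (Icc 1 m)) {i : ℕ} (hi : 1 ≤ i) :
    psiCls P1 Q (2 * i - 1) = fodd Q (P1.part (pred Q i)) := by
  unfold psiCls
  rw [if_neg (by rw [Nat.even_iff]; omega)]
  have h2 : (2 * i - 1 + 1) / 2 = i := by omega
  rw [h2]

theorem mem_Icc2_cases {x : ℕ} (hx : x ∈ Icc 1 (2 * m)) :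
    ∃ i, i ∈ Icc 1 m ∧ (x = 2 * i ∨ x = 2 * i - 1) := by
  rw [mem_Icc] at hx
  rcases Nat.even_or_odd x with ⟨k, hk⟩ | ⟨k, hk⟩
  · exact ⟨k, by rw [mem_Icc]; omega, Or.inl (by omega)⟩
  · exact ⟨k + 1, by rw [mem_Icc]; omega, Or.inr (by omega)⟩

theorem pred_mem_Icc (Q : Finpartition (Icc 1 m)) {i : ℕ} (hi : i ∈ Icc 1 m) :
    pred Q i ∈ Icc 1 m :=
  Q.le (Q.part_mem.2 hi) (pred_mem Q hi)

def Psi (P1 Q : Finpartition (Icc 1 m)) : Finpartition (Icc 1 (2 * m)) := by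
  refine ofClassFun (Icc 1 (2 * m)) (psiCls P1 Q) ?_ ?_ ?_
  · intro a ha
    obtain ⟨i, hi, hcase | hcase⟩ := mem_Icc2_cases ha
    · subst hcase
      rw [psiCls_even, mem_fodd_even]
      exact P1.mem_part hi
    · have hi1 : 1 ≤ i := (mem_Icc.1 hi).1
      subst hcase
      rw [psiCls_odd P1 Q hi1, mem_fodd_odd Q _ hi1]
      exact ⟨hi, P1.mem_part (pred_mem_Icc Q hi)⟩
  · intro a ha
    obtain ⟨i, hi, hcase | hcase⟩ := mem_Icc2_cases ha
    · subst hcase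
      rw [psiCls_even]
      exact fodd_subset Q (P1.le (P1.part_mem.2 hi))
    · have hi1 : 1 ≤ i := (mem_Icc.1 hi).1
      subst hcase
      rw [psiCls_odd P1 Q hi1]
      exact fodd_subset Q (P1.le (P1.part_mem.2 (pred_mem_Icc Q hi)))
  · intro a ha b hb hab
    obtain ⟨j, hj, hcaseb | hcaseb⟩ := mem_Icc2_cases hb
    all_goals {
      first
      | (subst hcaseb; rw [psiCls_even] at hab ⊢)
      | (have hj1 : 1 ≤ j := (mem_Icc.1 hj).1
         subst hcaseb; rw [psiCls_odd P1 Q hj1] at hab ⊢)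
      obtain ⟨i, hi, hcasea | hcasea⟩ := mem_Icc2_cases ha
      · have hi1 : 1 ≤ i := (mem_Icc.1 hi).1
        subst hcasea
        rw [psiCls_even]
        rw [mem_fodd_even] at hab
        rw [P1.part_eq_of_mem (P1.part_mem.2 ?_) hab]
        first
        | exact hj
        | exact pred_mem_Icc Q hj
      · have hi1 : 1 ≤ i := (mem_Icc.1 hi).1
        subst hcasea
        rw [psiCls_odd P1 Q hi1]
        rw [mem_fodd_odd Q _ hi1] at hab
        rw [P1.part_eq_of_mem (P1.part_mem.2 ?_) hab.2]
        first
        | exact hj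
        | exact pred_mem_Icc Q hj
    }

theorem psi_part_even (P1 Q : Finpartition (Icc 1 m)) {i : ℕ} (hi : i ∈ Icc 1 m) :
    (Psi P1 Q).part (2 * i) = fodd Q (P1.part i) := by
  rw [Psi, part_ofClassFun, psiCls_even]
  rw [mem_Icc] at hi ⊢
  omega

theorem psi_part_odd (P1 Q : Finpartition (Icc 1 m)) {i : ℕ} (hi : i ∈ Icc 1 m) :
    (Psi P1 Q).part (2 * i - 1) = fodd Q (P1.part (pred Q i)) := by
  rw [Psi, part_ofClassFun, psiCls_odd P1 Q (mem_Icc.1 hi).1]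
  rw [mem_Icc] at hi ⊢
  omega

theorem psi_parts_form {P1 Q : Finpartition (Icc 1 m)} {F : Finset ℕ}
    (hF : F ∈ (Psi P1 Q).parts) : ∃ B ∈ P1.parts, F = fodd Q B := by
  rw [Psi, parts_ofClassFun] at hF
  obtain ⟨x, hx, rfl⟩ := mem_image.1 hF
  obtain ⟨i, hi, hcase | hcase⟩ := mem_Icc2_cases hx
  · subst hcase
    rw [psiCls_even]
    exact ⟨P1.part i, P1.part_mem.2 hi, rfl⟩
  · have hi1 : 1 ≤ i := (mem_Icc.1 hi).1
    subst hcase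
    rw [psiCls_odd P1 Q hi1]
    exact ⟨P1.part (pred Q i), P1.part_mem.2 (pred_mem_Icc Q hi), rfl⟩

theorem fodd_mem_psi_parts {P1 Q : Finpartition (Icc 1 m)} {B : Finset ℕ}
    (hB : B ∈ P1.parts) : fodd Q B ∈ (Psi P1 Q).parts := by
  obtain ⟨b, hb⟩ := P1.nonempty_of_mem_parts hB
  have hbm : b ∈ Icc 1 m := P1.le hB hb
  have : fodd Q B = (Psi P1 Q).part (2 * b) := by
    rw [psi_part_even P1 Q hbm, P1.part_eq_of_mem hB hb]
  rw [this]
  refine (Psi P1 Q).part_mem.2 ?_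
  rw [mem_Icc] at hbm ⊢
  omega

theorem refines_part_subset {P1 Q : Finpartition (Icc 1 m)} (href : Refines P1 Q)
    {B : Finset ℕ} (hB : B ∈ P1.parts) {b : ℕ} (hb : b ∈ B) : B ⊆ Q.part b := by
  obtain ⟨C, hC, hBC⟩ := href B hB
  rwa [Q.part_eq_of_mem hC (hBC hb)]

theorem card_fodd {P1 Q : Finpartition (Icc 1 m)} (href : Refines P1 Q)
    {B : Finset ℕ} (hB : B ∈ P1.parts) : (fodd Q B).card = 2 * B.card := by
  obtain ⟨C, hC, hBC⟩ := href B hB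
  have hBm : B ⊆ Icc 1 m := P1.le hB
  have h1 : (B.image (fun b => 2 * b)).card = B.card :=
    Finset.card_image_of_injective _ (fun x y h => by omega)
  have h2 : (((Icc 1 m).filter (fun i => pred Q i ∈ B)).image (fun i => 2 * i - 1)).card
      = B.card := by
    rw [Finset.card_image_of_injOn, card_filter_pred_mem Q hC hBC]
    intro x hx y hy hxy
    have hxy' : 2 * x - 1 = 2 * y - 1 := hxy
    rw [mem_coe, mem_filter, mem_Icc] at hx hy
    omega
  rw [fodd, Finset.card_union_of_disjoint, h1, h2]
  · omega
  · rw [Finset.disjoint_left]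
    rintro x hx hx2
    obtain ⟨b, _, rfl⟩ := mem_image.1 hx
    obtain ⟨i, hi, hie⟩ := mem_image.1 hx2
    rw [mem_filter, mem_Icc] at hi
    omega

/-! ### Noncrossing property of Ψ -/

/-- "nonwrap" point data: point `p` of a doubled block, projecting to `ρ`. -/
def NWData (C : Finset ℕ) (p ρ : ℕ) : Prop :=
  p = 2 * ρ ∨ ∃ ι, p = 2 * ι - 1 ∧ ρ < ι ∧ ∀ k ∈ C, ¬(ρ < k ∧ k < ι)

/-- "wrap" point data. -/
def WData (C : Finset ℕ) (p ρ : ℕ) : Prop :=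
  ∃ ι, p = 2 * ι - 1 ∧ 1 ≤ ι ∧ ι ∈ C ∧ (∀ k ∈ C, ι ≤ k) ∧ (∀ k ∈ C, k ≤ ρ)

theorem point_data {P1 Q : Finpartition (Icc 1 m)} (href : Refines P1 Q) {B : Finset ℕ}
    (hB : B ∈ P1.parts) {b₀ : ℕ} (hb₀ : b₀ ∈ B) {p : ℕ} (hp : p ∈ fodd Q B) :
    ∃ ρ ∈ B, (NWData (Q.part b₀) p ρ ∨ WData (Q.part b₀) p ρ) ∧
      ∃ ι, 1 ≤ ι ∧ ι ∈ Q.part b₀ ∧ (p = 2 * ι ∨ p = 2 * ι - 1) := by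
  have hBsub : B ⊆ Q.part b₀ := refines_part_subset href hB hb₀
  have hBm : B ⊆ Icc 1 m := P1.le hB
  have hb₀m : b₀ ∈ Icc 1 m := hBm hb₀
  rcases point_cases hp with ⟨b, hb, rfl⟩ | ⟨i, hi, hpi, rfl⟩
  · exact ⟨b, hb, Or.inl (Or.inl rfl),
      b, (mem_Icc.1 (hBm hb)).1, hBsub hb, Or.inl rfl⟩
  · -- odd point
    have hpredm : pred Q i ∈ Q.part i := pred_mem Q hi
    have hpart : Q.part i = Q.part b₀ :=
      Q.eq_of_mem_parts (Q.part_mem.2 hi) (Q.part_mem.2 hb₀m) hpredm (hBsub hpi)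
    have hiC : i ∈ Q.part b₀ := hpart ▸ Q.mem_part hi
    have hi1 : 1 ≤ i := (mem_Icc.1 hi).1
    refine ⟨pred Q i, hpi, ?_, i, hi1, hiC, Or.inr rfl⟩
    by_cases hf : ((Q.part i).filter (· < i)).Nonempty
    · obtain ⟨hlt, hmax⟩ := pred_spec_lt Q hf
      refine Or.inl (Or.inr ⟨i, rfl, hlt, ?_⟩)
      intro k hk ⟨hk1, hk2⟩
      have : k ≤ pred Q i := hmax k (hpart ▸ hk) hk2
      omega
    · obtain ⟨hge, hmax⟩ := pred_spec_wrap Q hi hf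
      refine Or.inr ⟨i, rfl, hi1, hiC, ?_, ?_⟩
      · intro k hk; exact hge k (hpart ▸ hk)
      · intro k hk; exact hmax k (hpart ▸ hk)

theorem nw_lb {C : Finset ℕ} {p ρ : ℕ} (h : NWData C p ρ) : 2 * ρ ≤ p := by
  rcases h with rfl | ⟨ι, rfl, hρι, _⟩ <;> omega

theorem rho_mono {C : Finset ℕ} {p ρ p' ρ' : ℕ} (hρ : ρ ∈ C)
    (h : NWData C p ρ) (h' : NWData C p' ρ') (hpp' : p < p') : ρ ≤ ρ' := by
  by_contra hcon
  push_neg at hcon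
  have hlb := nw_lb h
  rcases h' with rfl | ⟨ι', rfl, hρι', hgap⟩
  · omega
  · have := hgap ρ hρ
    omega

theorem wrap_lt {C : Finset ℕ} {p₀ ρ₀ p ρ : ℕ} (hw : WData C p₀ ρ₀) (hρ : ρ ∈ C)
    (h : NWData C p ρ) : p₀ < p := by
  obtain ⟨ι₀, rfl, hι₀1, _, hmin, _⟩ := hw
  have h1 : ι₀ ≤ ρ := hmin ρ hρ
  have := nw_lb h
  omega

theorem wrap_unique {C : Finset ℕ} {p ρ p' ρ' : ℕ} (hw : WData C p ρ) (hw' : WData C p' ρ') :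
    p = p' := by
  obtain ⟨ι, rfl, hι1, hιC, hmin, _⟩ := hw
  obtain ⟨ι', rfl, hι'1, hι'C, hmin', _⟩ := hw'
  have h1 : ι ≤ ι' := hmin ι' hι'C
  have h2 : ι' ≤ ι := hmin' ι hιC
  omega

theorem psi_noncrossing (P1 Q : Finpartition (Icc 1 m)) (hP1 : IsNoncrossing P1)
    (hQ : IsNoncrossing Q) (href : Refines P1 Q) : IsNoncrossing (Psi P1 Q) := by
  intro a b c d hab hbc hcd F₁ hF₁ F₂ hF₂ ha hc hb hd
  obtain ⟨B₁, hB₁, rfl⟩ := psi_parts_form hF₁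
  obtain ⟨B₂, hB₂, rfl⟩ := psi_parts_form hF₂
  by_cases hBB : B₁ = B₂
  · rw [hBB]
  obtain ⟨b₁, hb₁⟩ := P1.nonempty_of_mem_parts hB₁
  obtain ⟨b₂, hb₂⟩ := P1.nonempty_of_mem_parts hB₂
  have hb₁m : b₁ ∈ Icc 1 m := P1.le hB₁ hb₁
  have hb₂m : b₂ ∈ Icc 1 m := P1.le hB₂ hb₂
  have hC₁ : Q.part b₁ ∈ Q.parts := Q.part_mem.2 hb₁m
  have hC₂ : Q.part b₂ ∈ Q.parts := Q.part_mem.2 hb₂m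
  obtain ⟨ρa, hρa, hda, ιa, hιa1, hιa, hba⟩ := point_data href hB₁ hb₁ ha
  obtain ⟨ρc, hρc, hdc, ιc, hιc1, hιc, hbc'⟩ := point_data href hB₁ hb₁ hc
  obtain ⟨ρb, hρb, hdb, ιb, hιb1, hιb, hbb⟩ := point_data href hB₂ hb₂ hb
  obtain ⟨ρd, hρd, hdd, ιd, hιd1, hιd, hbd⟩ := point_data href hB₂ hb₂ hd
  by_cases hCC : Q.part b₁ = Q.part b₂
  · -- same class: use ρ projections
    rw [← hCC] at hdb hdd hιb hιd
    have hB₁C : B₁ ⊆ Q.part b₁ := refines_part_subset href hB₁ hb₁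
    have hB₂C : B₂ ⊆ Q.part b₁ := by
      rw [hCC]; exact refines_part_subset href hB₂ hb₂
    have hne12 : ∀ x y : ℕ, x ∈ B₁ → y ∈ B₂ → x ≠ y := by
      intro x y h1 h2 he
      subst he
      exact hBB (P1.eq_of_mem_parts hB₁ hB₂ h1 h2)
    have hWb : NWData (Q.part b₁) b ρb := by
      rcases hdb with h | h
      · exact h
      · exfalso
        rcases hda with h' | h'
        · exact absurd (wrap_lt h (hB₁C hρa) h') (by omega)
        · exact absurd (wrap_unique h' h) (by omega)
    have hWc : NWData (Q.part b₁) c ρc := by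
      rcases hdc with h | h
      · exact h
      · exfalso
        rcases hda with h' | h'
        · exact absurd (wrap_lt h (hB₁C hρa) h') (by omega)
        · exact absurd (wrap_unique h' h) (by omega)
    have hWd : NWData (Q.part b₁) d ρd := by
      rcases hdd with h | h
      · exact h
      · exfalso
        rcases hda with h' | h'
        · exact absurd (wrap_lt h (hB₁C hρa) h') (by omega)
        · exact absurd (wrap_unique h' h) (by omega)
    have hρbc : ρb < ρc :=
      lt_of_le_of_ne (rho_mono (hB₂C hρb) hWb hWc hbc) (hne12 ρc ρb hρc hρb).symm
    have hρcd : ρc < ρd :=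
      lt_of_le_of_ne (rho_mono (hB₁C hρc) hWc hWd hcd) (hne12 ρc ρd hρc hρd)
    exfalso
    rcases hda with hWa | hwrapa
    · have hρab : ρa < ρb :=
        lt_of_le_of_ne (rho_mono (hB₁C hρa) hWa hWb hab) (hne12 ρa ρb hρa hρb)
      exact hBB (hP1 ρa ρb ρc ρd hρab hρbc hρcd B₁ hB₁ B₂ hB₂ hρa hρc hρb hρd)
    · obtain ⟨ιa', _, _, _, _, hmax⟩ := hwrapa
      have hρda : ρd < ρa :=
        lt_of_le_of_ne (hmax ρd (hB₂C hρd)) (hne12 ρa ρd hρa hρd).symm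
      exact hBB (hP1 ρb ρc ρd ρa hρbc hρcd hρda B₂ hB₂ B₁ hB₁ hρb hρd hρc hρa).symm
  · -- different classes: use ι projections
    exfalso
    have hmono : ∀ p ι p' ι' : ℕ, 1 ≤ ι → 1 ≤ ι' → (p = 2 * ι ∨ p = 2 * ι - 1) →
        (p' = 2 * ι' ∨ p' = 2 * ι' - 1) → p < p' → ι ≤ ι' := by
      intro p ι p' ι' h1 h1' hp hp' hpp'
      rcases hp with rfl | rfl <;> rcases hp' with rfl | rfl <;> omega
    have hneC : ∀ x y : ℕ, x ∈ Q.part b₁ → y ∈ Q.part b₂ → x ≠ y := by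
      intro x y h1 h2 he
      subst he
      exact hCC (Q.eq_of_mem_parts hC₁ hC₂ h1 h2)
    have h1 : ιa < ιb :=
      lt_of_le_of_ne (hmono _ _ _ _ hιa1 hιb1 hba hbb hab) (hneC ιa ιb hιa hιb)
    have h2 : ιb < ιc :=
      lt_of_le_of_ne (hmono _ _ _ _ hιb1 hιc1 hbb hbc' hbc) (hneC ιc ιb hιc hιb).symm
    have h3 : ιc < ιd :=
      lt_of_le_of_ne (hmono _ _ _ _ hιc1 hιd1 hbc' hbd hcd) (hneC ιc ιd hιc hιd)
    exact hCC (hQ ιa ιb ιc ιd h1 h2 h3 _ hC₁ _ hC₂ hιa hιc hιb hιd)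

/-! ### Structure of noncrossing partitions with even blocks -/

theorem hull_closed {π : Finpartition (Icc 1 (2 * m))} (hNC : IsNoncrossing π)
    {F : Finset ℕ} (hF : F ∈ π.parts) {x y z : ℕ} (hx : x ∈ F) (hy : y ∈ F)
    (hxz : x < z) (hzy : z < y) (hzF : z ∉ F) :
    ∀ w ∈ π.part z, x < w ∧ w < y := by
  intro w hw
  have hxm := mem_Icc.1 (π.le hF hx)
  have hym := mem_Icc.1 (π.le hF hy)
  have hzm : z ∈ Icc 1 (2 * m) := by rw [mem_Icc]; omega
  have hpz : π.part z ∈ π.parts := π.part_mem.2 hzm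
  have hzz : z ∈ π.part z := π.mem_part hzm
  have hne : π.part z ≠ F := fun h => hzF (h ▸ hzz)
  have hwx : w ≠ x := by
    intro he
    exact hne (π.eq_of_mem_parts hpz hF (he ▸ hw) hx)
  have hwy : w ≠ y := by
    intro he
    exact hne (π.eq_of_mem_parts hpz hF (he ▸ hw) hy)
  constructor
  · by_contra hcon
    push_neg at hcon
    have hwx' : w < x := by omega
    exact hne (hNC w x z y hwx' hxz hzy _ hpz _ hF hw hzz hx hy)
  · by_contra hcon
    push_neg at hcon
    have hwy' : y < w := by omega
    exact hne (hNC x z y w hxz hzy hwy' _ hF _ hpz hx hy hzz hw).symm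

theorem gap_odd {q : ℕ} {π : Finpartition (Icc 1 (2 * m))} (hNC : IsNoncrossing π)
    (hcard : ∀ B ∈ π.parts, B.card = 2 * q) {F : Finset ℕ} (hF : F ∈ π.parts)
    {x y : ℕ} (hx : x ∈ F) (hy : y ∈ F) (hxy : x < y)
    (hgap : ∀ z ∈ F, ¬(x < z ∧ z < y)) : Odd (y - x) := by
  set T := Ioo x y with hT
  have hTsub : ∀ z ∈ T, π.part z ⊆ T := by
    intro z hz
    rw [hT, mem_Ioo] at hz
    have hzF : z ∉ F := fun h => hgap z h hz
    intro w hw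
    rw [hT, mem_Ioo]
    exact hull_closed hNC hF hx hy hz.1 hz.2 hzF w hw
  have hTeq : T = (π.parts.filter (fun P => P ⊆ T)).biUnion id := by
    ext z
    constructor
    · intro hz
      have hz' := mem_Ioo.1 hz
      have hzm : z ∈ Icc 1 (2 * m) := by
        have hxm := mem_Icc.1 (π.le hF hx)
        have hym := mem_Icc.1 (π.le hF hy)
        rw [mem_Icc]; omega
      refine mem_biUnion.2 ⟨π.part z, mem_filter.2 ⟨π.part_mem.2 hzm, hTsub z hz⟩, π.mem_part hzm⟩
    · intro hz
      obtain ⟨P, hP, hzP⟩ := mem_biUnion.1 hz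
      exact (mem_filter.1 hP).2 hzP
  have hdvd : 2 ∣ T.card := by
    rw [hTeq, card_biUnion]
    · refine Finset.dvd_sum ?_
      intro P hP
      show 2 ∣ P.card
      rw [hcard P (mem_filter.1 hP).1]
      exact ⟨q, rfl⟩
    · intro P₁ h₁ P₂ h₂ hne
      exact π.disjoint (mem_filter.1 h₁).1 (mem_filter.1 h₂).1 hne
  rw [hT, Nat.card_Ioo] at hdvd
  obtain ⟨t, ht⟩ := hdvd
  exact ⟨t, by omega⟩

/-- the successor of `x` in a finset. -/
def nxt (F : Finset ℕ) (x : ℕ) : ℕ :=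
  if h : (F.filter (x < ·)).Nonempty then (F.filter (x < ·)).min' h else x

theorem nxt_spec {F : Finset ℕ} {x : ℕ} (h : (F.filter (x < ·)).Nonempty) :
    nxt F x ∈ F ∧ x < nxt F x ∧ ∀ z ∈ F, ¬(x < z ∧ z < nxt F x) := by
  unfold nxt
  rw [dif_pos h]
  have h1 := (F.filter (x < ·)).min'_mem h
  rw [mem_filter] at h1
  refine ⟨h1.1, h1.2, ?_⟩
  intro z hz ⟨hz1, hz2⟩
  have := Finset.min'_le (F.filter (x < ·)) z (mem_filter.2 ⟨hz, hz1⟩)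
  omega

theorem nxt_parity {q : ℕ} {π : Finpartition (Icc 1 (2 * m))} (hNC : IsNoncrossing π)
    (hcard : ∀ B ∈ π.parts, B.card = 2 * q) {F : Finset ℕ} (hF : F ∈ π.parts)
    {x : ℕ} (hx : x ∈ F) (h : (F.filter (x < ·)).Nonempty) :
    (nxt F x) % 2 = 1 - x % 2 := by
  obtain ⟨h1, h2, h3⟩ := nxt_spec h
  obtain ⟨t, ht⟩ := gap_odd hNC hcard hF hx h1 h2 h3
  omega

theorem nxt_inj {F : Finset ℕ} {x y : ℕ} (hx : x ∈ F) (hy : y ∈ F)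
    (hxf : (F.filter (x < ·)).Nonempty) (hyf : (F.filter (y < ·)).Nonempty)
    (hxy : nxt F x = nxt F y) : x = y := by
  obtain ⟨hx1, hx2, hx3⟩ := nxt_spec hxf
  obtain ⟨hy1, hy2, hy3⟩ := nxt_spec hyf
  rcases Nat.lt_trichotomy x y with h | h | h
  · exact (hx3 y hy ⟨h, by omega⟩).elim
  · exact h
  · exact (hy3 x hx ⟨h, by omega⟩).elim

theorem card_parity_le {q : ℕ} {π : Finpartition (Icc 1 (2 * m))} (hNC : IsNoncrossing π)
    (hcard : ∀ B ∈ π.parts, B.card = 2 * q) {F : Finset ℕ} (hF : F ∈ π.parts)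
    (pr : ℕ) :
    (F.filter (fun x => x % 2 = pr)).card ≤ (F.filter (fun x => ¬ (x % 2 = pr))).card + 1 := by
  have hFne : F.Nonempty := π.nonempty_of_mem_parts hF
  set M := F.max' hFne with hM
  have hMF : M ∈ F := F.max'_mem hFne
  have key : ((F.filter (fun x => x % 2 = pr)).erase M).card ≤
      (F.filter (fun x => ¬ (x % 2 = pr))).card := by
    refine Finset.card_le_card_of_injOn (nxt F) ?_ ?_
    · intro x hx
      rw [mem_coe, mem_erase, mem_filter] at hx
      obtain ⟨hxM, hxF, hxp⟩ := hx
      have hlt : x < M := lt_of_le_of_ne (F.le_max' x hxF) hxM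
      have hfne : (F.filter (x < ·)).Nonempty := ⟨M, mem_filter.2 ⟨hMF, hlt⟩⟩
      have hpar := nxt_parity hNC hcard hF hxF hfne
      have hmem := (nxt_spec hfne).1
      rw [mem_coe, mem_filter]
      exact ⟨hmem, by omega⟩
    · intro x hx y hy hxy
      rw [mem_coe, mem_erase, mem_filter] at hx hy
      have hxlt : x < M := lt_of_le_of_ne (F.le_max' x hx.2.1) hx.1
      have hylt : y < M := lt_of_le_of_ne (F.le_max' y hy.2.1) hy.1
      exact nxt_inj hx.2.1 hy.2.1 ⟨M, mem_filter.2 ⟨hMF, hxlt⟩⟩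
        ⟨M, mem_filter.2 ⟨hMF, hylt⟩⟩ hxy
  have := Finset.card_erase_le (a := M) (s := F.filter (fun x => x % 2 = pr))
  have h2 : (F.filter (fun x => x % 2 = pr)).card ≤
      ((F.filter (fun x => x % 2 = pr)).erase M).card + 1 := by
    rcases Finset.decidableMem M (F.filter (fun x => x % 2 = pr)) with hin | hin
    · rw [Finset.erase_eq_of_notMem hin]; omega
    · rw [Finset.card_erase_of_mem hin]
      have : 1 ≤ (F.filter (fun x => x % 2 = pr)).card := Finset.card_pos.2 ⟨M, hin⟩
      omega
  omega

theorem card_evens {q : ℕ} {π : Finpartition (Icc 1 (2 * m))} (hNC : IsNoncrossing π)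
    (hcard : ∀ B ∈ π.parts, B.card = 2 * q) {F : Finset ℕ} (hF : F ∈ π.parts) :
    (F.filter (fun x => x % 2 = 0)).card = q := by
  have h0 := card_parity_le hNC hcard hF 0
  have h1 := card_parity_le hNC hcard hF 1
  have hsum := Finset.card_filter_add_card_filter_not
    (s := F) (p := fun x => x % 2 = 0)
  rw [hcard F hF] at hsum
  have he : F.filter (fun x => ¬ (x % 2 = 1)) = F.filter (fun x => x % 2 = 0) := by
    apply Finset.filter_congr
    intro x _
    show ¬ (x % 2 = 1) ↔ x % 2 = 0
    omega
  have he2 : F.filter (fun x => x % 2 = 1) = F.filter (fun x => ¬ (x % 2 = 0)) := by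
    apply Finset.filter_congr
    intro x _
    show x % 2 = 1 ↔ ¬ (x % 2 = 0)
    omega
  rw [he] at h1
  rw [he2] at h1
  omega

theorem exists_even_mem {q : ℕ} {π : Finpartition (Icc 1 (2 * m))} (hNC : IsNoncrossing π)
    (hcard : ∀ B ∈ π.parts, B.card = 2 * q) (hq : 0 < q) {F : Finset ℕ} (hF : F ∈ π.parts) :
    ∃ j, j ∈ Icc 1 m ∧ 2 * j ∈ F := by
  have h := card_evens hNC hcard hF
  have : (F.filter (fun x => x % 2 = 0)).Nonempty := by
    rw [← Finset.card_pos, h]; exact hq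
  obtain ⟨x, hx⟩ := this
  rw [mem_filter] at hx
  have hxm := mem_Icc.1 (π.le hF hx.1)
  refine ⟨x / 2, ?_, ?_⟩
  · rw [mem_Icc]; omega
  · have : 2 * (x / 2) = x := by omega
    rw [this]; exact hx.1

theorem minmax_parity {q : ℕ} {π : Finpartition (Icc 1 (2 * m))} (hNC : IsNoncrossing π)
    (hcard : ∀ B ∈ π.parts, B.card = 2 * q) (hq : 0 < q) {F : Finset ℕ} (hF : F ∈ π.parts)
    (hFne : F.Nonempty) (hminodd : (F.min' hFne) % 2 = 1) : (F.max' hFne) % 2 = 0 := by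
  by_contra hcon
  have hMF : F.max' hFne ∈ F := F.max'_mem hFne
  have hmF : F.min' hFne ∈ F := F.min'_mem hFne
  set M := F.max' hFne
  set mn := F.min' hFne
  have hmnO : mn ∈ F.filter (fun x => ¬ (x % 2 = 0)) := mem_filter.2 ⟨hmF, by omega⟩
  have key : (F.filter (fun x => x % 2 = 0)).card ≤
      ((F.filter (fun x => ¬ (x % 2 = 0))).erase mn).card := by
    refine Finset.card_le_card_of_injOn (nxt F) ?_ ?_
    · intro x hx
      rw [mem_coe, mem_filter] at hx
      obtain ⟨hxF, hxp⟩ := hx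
      have hxM : x ≠ M := by
        intro he
        rw [he] at hxp; omega
      have hlt : x < M := lt_of_le_of_ne (F.le_max' x hxF) hxM
      have hfne : (F.filter (x < ·)).Nonempty := ⟨M, mem_filter.2 ⟨hMF, hlt⟩⟩
      have hpar := nxt_parity hNC hcard hF hxF hfne
      obtain ⟨hn1, hn2, _⟩ := nxt_spec hfne
      rw [mem_coe, mem_erase, mem_filter]
      have hxmn : mn ≤ x := F.min'_le x hxF
      refine ⟨by omega, hn1, by omega⟩
    · intro x hx y hy hxy
      rw [mem_coe, mem_filter] at hx hy
      have hxM : x < M := lt_of_le_of_ne (F.le_max' x hx.1) (by intro he; rw [he] at hx; omega)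
      have hyM : y < M := lt_of_le_of_ne (F.le_max' y hy.1) (by intro he; rw [he] at hy; omega)
      exact nxt_inj hx.1 hy.1 ⟨M, mem_filter.2 ⟨hMF, hxM⟩⟩ ⟨M, mem_filter.2 ⟨hMF, hyM⟩⟩ hxy
  have hE := card_evens hNC hcard hF
  have hsum := Finset.card_filter_add_card_filter_not
    (s := F) (p := fun x => x % 2 = 0)
  rw [hcard F hF] at hsum
  have := Finset.card_erase_of_mem hmnO
  omega

/-! ### The inverse map: recovering the pair from a doubled partition -/

/-- linking relation on `{1,…,m}` induced by `π` on `{1,…,2m}`. -/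
def rRel (π : Finpartition (Icc 1 (2 * m))) (i j : ℕ) : Prop :=
  i ∈ Icc 1 m ∧ j ∈ Icc 1 m ∧
    (π.part (2 * i) = π.part (2 * j) ∨ 2 * i - 1 ∈ π.part (2 * j))

/-- the equivalence class of the generated equivalence. -/
def cls (π : Finpartition (Icc 1 (2 * m))) (i : ℕ) : Finset ℕ :=
  (Icc 1 m).filter (fun j => Relation.EqvGen (rRel π) i j)

theorem mem_cls {π : Finpartition (Icc 1 (2 * m))} {i j : ℕ} :
    j ∈ cls π i ↔ (j ∈ Icc 1 m ∧ Relation.EqvGen (rRel π) i j) := by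
  unfold cls; rw [mem_filter]

theorem cls_eq_of_gen {π : Finpartition (Icc 1 (2 * m))} {i j : ℕ}
    (h : Relation.EqvGen (rRel π) i j) : cls π i = cls π j := by
  unfold cls
  apply Finset.filter_congr
  intro k _
  constructor
  · intro hk
    exact Relation.EqvGen.trans _ _ _ (Relation.EqvGen.symm _ _ h) hk
  · intro hk
    exact Relation.EqvGen.trans _ _ _ h hk

def P2of (π : Finpartition (Icc 1 (2 * m))) : Finpartition (Icc 1 m) := by
  refine ofClassFun (Icc 1 m) (cls π) ?_ ?_ ?_
  · intro a ha
    exact mem_cls.2 ⟨ha, Relation.EqvGen.refl a⟩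
  · intro a _
    exact @id (cls π a ⊆ Icc 1 m) (Finset.filter_subset _ _)
  · intro a _ b _ hab
    exact (cls_eq_of_gen (mem_cls.1 hab).2).symm

theorem part_P2of {π : Finpartition (Icc 1 (2 * m))} {i : ℕ} (hi : i ∈ Icc 1 m) :
    (P2of π).part i = cls π i :=
  part_ofClassFun _ _ _ _ _ hi

theorem eqvgen_invar {r : ℕ → ℕ → Prop} (P : ℕ → Prop)
    (hstep : ∀ a b, r a b → (P a ↔ P b)) {i j : ℕ} (h : Relation.EqvGen r i j) : P i ↔ P j := by
  induction h with
  | rel a b hab => exact hstep a b hab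
  | refl a => exact Iff.rfl
  | symm a b _ ih => exact ih.symm
  | trans a b c _ _ ih1 ih2 => exact ih1.trans ih2

theorem mem2_of_mem1 {i : ℕ} (hi : i ∈ Icc 1 m) :
    2 * i ∈ Icc 1 (2 * m) ∧ 2 * i - 1 ∈ Icc 1 (2 * m) := by
  rw [mem_Icc] at hi
  constructor <;> rw [mem_Icc] <;> omega

theorem lift_linked {q : ℕ} {π : Finpartition (Icc 1 (2 * m))} (hNC : IsNoncrossing π)
    (hcard : ∀ B ∈ π.parts, B.card = 2 * q) (hq : 0 < q) {i j : ℕ}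
    (hi : i ∈ Icc 1 m) (hj : j ∈ Icc 1 m)
    (h : 2 * j ∈ π.part (2 * i) ∨ 2 * j - 1 ∈ π.part (2 * i) ∨
         2 * j ∈ π.part (2 * i - 1) ∨ 2 * j - 1 ∈ π.part (2 * i - 1)) :
    Relation.EqvGen (rRel π) i j := by
  obtain ⟨h2i, h2i1⟩ := mem2_of_mem1 hi
  obtain ⟨h2j, h2j1⟩ := mem2_of_mem1 hj
  rcases h with h | h | h | h
  · refine Relation.EqvGen.rel _ _ ⟨hi, hj, Or.inl ?_⟩
    exact π.eq_of_mem_parts (π.part_mem.2 h2i) (π.part_mem.2 h2j) h (π.mem_part h2j)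
  · refine Relation.EqvGen.symm _ _ (Relation.EqvGen.rel _ _ ⟨hj, hi, Or.inr h⟩)
  · refine Relation.EqvGen.rel _ _ ⟨hi, hj, Or.inr ?_⟩
    have : π.part (2 * j) = π.part (2 * i - 1) :=
      π.eq_of_mem_parts (π.part_mem.2 h2j) (π.part_mem.2 h2i1) (π.mem_part h2j) h
    rw [this]
    exact π.mem_part h2i1
  · have hF : π.part (2 * i - 1) ∈ π.parts := π.part_mem.2 h2i1
    obtain ⟨k, hk, h2k⟩ := exists_even_mem hNC hcard hq hF
    have hpk : π.part (2 * k) = π.part (2 * i - 1) :=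
      π.part_eq_of_mem hF h2k
    have hik : rRel π i k := ⟨hi, hk, Or.inr (by rw [hpk]; exact π.mem_part h2i1)⟩
    have hjk : rRel π j k := ⟨hj, hk, Or.inr (by rw [hpk]; exact h)⟩
    exact Relation.EqvGen.trans _ _ _ (Relation.EqvGen.rel _ _ hik) (Relation.EqvGen.symm _ _ (Relation.EqvGen.rel _ _ hjk))

/-- The key structural lemma: the odd point `2i-1` lies in the block of the double of the
cyclic predecessor of `i` in its `P2of`-class. -/
theorem SL {q : ℕ} {π : Finpartition (Icc 1 (2 * m))} (hNC : IsNoncrossing π)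
    (hcard : ∀ B ∈ π.parts, B.card = 2 * q) (hq : 0 < q) {i : ℕ} (hi : i ∈ Icc 1 m) :
    2 * pred (P2of π) i ∈ π.part (2 * i - 1) := by
  obtain ⟨h2i, h2i1⟩ := mem2_of_mem1 hi
  have hi1 : 1 ≤ i := (mem_Icc.1 hi).1
  set F := π.part (2 * i - 1) with hFdef
  have hF : F ∈ π.parts := π.part_mem.2 h2i1
  have hmemF : 2 * i - 1 ∈ F := π.mem_part h2i1
  by_cases hbelow : (F.filter (· < 2 * i - 1)).Nonempty
  · -- Case A : there is an element of F below 2i-1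
    set k := (F.filter (· < 2 * i - 1)).max' hbelow with hkdef
    have hkmem : k ∈ F ∧ k < 2 * i - 1 := by
      have := (F.filter (· < 2 * i - 1)).max'_mem hbelow
      rw [mem_filter] at this
      exact this
    have hkmax : ∀ z ∈ F, z < 2 * i - 1 → z ≤ k := by
      intro z hz hz2
      exact Finset.le_max' (F.filter (· < 2 * i - 1)) z (mem_filter.2 ⟨hz, hz2⟩)
    have hgap : ∀ z ∈ F, ¬(k < z ∧ z < 2 * i - 1) := by
      intro z hz ⟨hz1, hz2⟩
      have := hkmax z hz hz2
      omega
    have hkodd : Odd (2 * i - 1 - k) := gap_odd hNC hcard hF hkmem.1 hmemF hkmem.2 hgap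
    have hkeven : k % 2 = 0 := by
      obtain ⟨t, ht⟩ := hkodd
      omega
    have hkm := mem_Icc.1 (π.le hF hkmem.1)
    set j := k / 2 with hjdef
    have hk2j : k = 2 * j := by omega
    have hjm : j ∈ Icc 1 m := by rw [mem_Icc]; omega
    have hji : j < i := by omega
    -- j is linked to i
    have hgen : Relation.EqvGen (rRel π) i j := by
      refine Relation.EqvGen.rel _ _ ⟨hi, hjm, Or.inr ?_⟩
      have : π.part (2 * j) = F := π.part_eq_of_mem hF (hk2j ▸ hkmem.1)
      rw [this]
      exact hmemF
    have hjcls : j ∈ (P2of π).part i := by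
      rw [part_P2of hi, mem_cls]
      exact ⟨hjm, hgen⟩
    -- block closure of the interval J = Ioo k (2i-1)
    have hJclosed : ∀ z ∈ Ioo k (2 * i - 1), π.part z ⊆ Ioo k (2 * i - 1) := by
      intro z hz
      rw [mem_Ioo] at hz
      have hzF : z ∉ F := fun h => hgap z h hz
      intro w hw
      rw [mem_Ioo]
      exact hull_closed hNC hF hkmem.1 hmemF hz.1 hz.2 hzF w hw
    -- invariance of the interval under the relation
    have hinv : ∀ l, Relation.EqvGen (rRel π) i l → ¬ (2 * l ∈ Ioo k (2 * i - 1)) := by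
      intro l hl
      have h0 := eqvgen_invar (fun t => 2 * t ∈ Ioo k (2 * i - 1)) ?_ hl
      · have h3 : (2 * i ∈ Ioo k (2 * i - 1)) ↔ (2 * l ∈ Ioo k (2 * i - 1)) := h0
        intro hcon
        have := h3.2 hcon
        rw [mem_Ioo] at this
        omega
      · intro a b ⟨ham, hbm, hab⟩
        show 2 * a ∈ Ioo k (2 * i - 1) ↔ 2 * b ∈ Ioo k (2 * i - 1)
        have ham' := mem_Icc.1 ham
        have hbm' := mem_Icc.1 hbm
        rcases hab with hab | hab
        · constructor
          · intro h
            have := hJclosed _ h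
            rw [hab] at this
            exact this (π.mem_part (mem2_of_mem1 hbm).1)
          · intro h
            have := hJclosed _ h
            rw [← hab] at this
            exact this (π.mem_part (mem2_of_mem1 ham).1)
        · -- 2a-1 ∈ part (2b)
          have hpeq : π.part (2 * a - 1) = π.part (2 * b) :=
            π.part_eq_of_mem (π.part_mem.2 (mem2_of_mem1 hbm).1) hab
          constructor
          · intro h
            rw [mem_Ioo] at h
            have ha1 : 2 * a - 1 ∈ Ioo k (2 * i - 1) := by
              rw [mem_Ioo]
              omega
            have := hJclosed _ ha1
            rw [hpeq] at this
            exact this (π.mem_part (mem2_of_mem1 hbm).1)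
          · intro h
            have hsub := hJclosed _ h
            have ha1 : 2 * a - 1 ∈ Ioo k (2 * i - 1) := by
              refine hsub ?_
              rw [← hpeq]
              exact π.mem_part (mem2_of_mem1 ham).2
            rw [mem_Ioo] at ha1 ⊢
            omega
    -- now show pred = j
    have hfne : (((P2of π).part i).filter (· < i)).Nonempty := ⟨j, mem_filter.2 ⟨hjcls, hji⟩⟩
    obtain ⟨hplt, hpmax⟩ := pred_spec_lt (P2of π) hfne
    have hpj : j ≤ pred (P2of π) i := hpmax j hjcls hji
    have hpcls : pred (P2of π) i ∈ (P2of π).part i := pred_mem (P2of π) hi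
    have hpgen : Relation.EqvGen (rRel π) i (pred (P2of π) i) := by
      have := mem_cls.1 (by rw [← part_P2of hi]; exact hpcls)
      exact this.2
    have := hinv _ hpgen
    rw [mem_Ioo] at this
    have hpeqj : pred (P2of π) i = j := by omega
    rw [hpeqj, ← hk2j]
    exact hkmem.1
  · -- Case B : 2i-1 is the minimum of F
    have hFne : F.Nonempty := ⟨_, hmemF⟩
    have hmin : F.min' hFne = 2 * i - 1 := by
      have h1 := F.min'_le _ hmemF
      have h2 : ∀ z ∈ F, 2 * i - 1 ≤ z := by
        intro z hz
        by_contra hcon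
        exact hbelow ⟨z, mem_filter.2 ⟨hz, by omega⟩⟩
      have := h2 _ (F.min'_mem hFne)
      omega
    have hminodd : (F.min' hFne) % 2 = 1 := by rw [hmin]; omega
    have hmaxeven := minmax_parity hNC hcard hq hF hFne hminodd
    set K := F.max' hFne with hKdef
    have hKF : K ∈ F := F.max'_mem hFne
    have hKm := mem_Icc.1 (π.le hF hKF)
    set k := K / 2 with hkdef
    have hK2k : K = 2 * k := by omega
    have hkm : k ∈ Icc 1 m := by rw [mem_Icc]; omega
    have hiK : 2 * i - 1 ≤ K := by
      rw [← hmin]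
      exact F.min'_le _ hKF
    have hiK' : 2 * i ≤ K := by omega
    -- k is linked to i
    have hgenk : Relation.EqvGen (rRel π) i k := by
      refine Relation.EqvGen.rel _ _ ⟨hi, hkm, Or.inr ?_⟩
      have : π.part (2 * k) = F := π.part_eq_of_mem hF (hK2k ▸ hKF)
      rw [this]
      exact hmemF
    -- hull closure of H = Icc (2i-1) K
    have hHclosed : ∀ z ∈ Icc (2 * i - 1) K, π.part z ⊆ Icc (2 * i - 1) K := by
      intro z hz
      rw [mem_Icc] at hz
      by_cases hzF : z ∈ F
      · have : π.part z = F := π.part_eq_of_mem hF hzF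
        rw [this]
        intro w hw
        rw [mem_Icc]
        have h1 : F.min' hFne ≤ w := F.min'_le _ hw
        have h2 : w ≤ F.max' hFne := F.le_max' _ hw
        rw [hmin] at h1
        exact ⟨h1, h2⟩
      · have hz1 : 2 * i - 1 < z := by
          rcases Nat.lt_or_ge (2 * i - 1) z with h | h
          · exact h
          · have : z = 2 * i - 1 := by omega
            rw [this] at hzF
            exact absurd hmemF hzF
        have hz2 : z < K := by
          rcases Nat.lt_or_ge z K with h | h
          · exact h
          · have : z = K := by omega
            rw [this] at hzF
            exact absurd hKF hzF
        intro w hw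
        have := hull_closed hNC hF hmemF hKF hz1 hz2 hzF w hw
        rw [mem_Icc]
        omega
    have hinv : ∀ l, Relation.EqvGen (rRel π) i l → 2 * l ∈ Icc (2 * i - 1) K := by
      intro l hl
      have h0 := eqvgen_invar (fun t => 2 * t ∈ Icc (2 * i - 1) K) ?_ hl
      · have h3 : (2 * i ∈ Icc (2 * i - 1) K) ↔ (2 * l ∈ Icc (2 * i - 1) K) := h0
        refine h3.1 ?_
        rw [mem_Icc]
        omega
      · intro a b ⟨ham, hbm, hab⟩
        show 2 * a ∈ Icc (2 * i - 1) K ↔ 2 * b ∈ Icc (2 * i - 1) K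
        have ham' := mem_Icc.1 ham
        have hbm' := mem_Icc.1 hbm
        have hpair : ∀ t : ℕ, 1 ≤ t → (2 * t ∈ Icc (2 * i - 1) K ↔ 2 * t - 1 ∈ Icc (2 * i - 1) K) := by
          intro t ht
          rw [mem_Icc, mem_Icc]
          omega
        rcases hab with hab | hab
        · constructor
          · intro h
            have := hHclosed _ h
            rw [hab] at this
            exact this (π.mem_part (mem2_of_mem1 hbm).1)
          · intro h
            have := hHclosed _ h
            rw [← hab] at this
            exact this (π.mem_part (mem2_of_mem1 ham).1)
        · have hpeq : π.part (2 * a - 1) = π.part (2 * b) :=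
            π.part_eq_of_mem (π.part_mem.2 (mem2_of_mem1 hbm).1) hab
          constructor
          · intro h
            have ha1 : 2 * a - 1 ∈ Icc (2 * i - 1) K := (hpair a (by omega)).1 h
            have := hHclosed _ ha1
            rw [hpeq] at this
            exact this (π.mem_part (mem2_of_mem1 hbm).1)
          · intro h
            have hsub := hHclosed _ h
            have ha1 : 2 * a - 1 ∈ Icc (2 * i - 1) K := by
              refine hsub ?_
              rw [← hpeq]
              exact π.mem_part (mem2_of_mem1 ham).2
            exact (hpair a (by omega)).2 ha1
    -- the filter below i is empty
    have hfe : ¬ (((P2of π).part i).filter (· < i)).Nonempty := by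
      rintro ⟨l, hl⟩
      rw [mem_filter, part_P2of hi, mem_cls] at hl
      have := hinv l hl.1.2
      rw [mem_Icc] at this
      omega
    obtain ⟨hge, hmax⟩ := pred_spec_wrap (P2of π) hi hfe
    -- pred = max of class = k
    have hkcls : k ∈ (P2of π).part i := by
      rw [part_P2of hi, mem_cls]
      exact ⟨hkm, hgenk⟩
    have h1 : k ≤ pred (P2of π) i := hmax k hkcls
    have hpcls : pred (P2of π) i ∈ (P2of π).part i := pred_mem (P2of π) hi
    have hpgen : Relation.EqvGen (rRel π) i (pred (P2of π) i) := by
      have := mem_cls.1 (by rw [← part_P2of hi]; exact hpcls)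
      exact this.2
    have h2 := hinv _ hpgen
    rw [mem_Icc] at h2
    have : pred (P2of π) i = k := by omega
    rw [this, ← hK2k]
    exact hKF

/-! ### The first component of Φ and its properties -/

def evensOf (F : Finset ℕ) : Finset ℕ := (F.filter (fun x => x % 2 = 0)).image (· / 2)

theorem mem_evensOf {F : Finset ℕ} {j : ℕ} : j ∈ evensOf F ↔ 2 * j ∈ F := by
  unfold evensOf
  simp only [mem_image, mem_filter]
  constructor
  · rintro ⟨x, ⟨hx, hp⟩, rfl⟩
    have h : 2 * (x / 2) = x := by omega
    rw [h]
    exact hx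
  · intro h
    exact ⟨2 * j, ⟨h, by omega⟩, by omega⟩

def P1of (π : Finpartition (Icc 1 (2 * m))) : Finpartition (Icc 1 m) := by
  refine ofClassFun (Icc 1 m) (fun i => evensOf (π.part (2 * i))) ?_ ?_ ?_
  · intro a ha
    rw [mem_evensOf]
    exact π.mem_part (mem2_of_mem1 ha).1
  · intro a ha j hj
    rw [mem_evensOf] at hj
    have := mem_Icc.1 (π.le (π.part_mem.2 (mem2_of_mem1 ha).1) hj)
    rw [mem_Icc]
    omega
  · intro a _ b hb hab
    rw [mem_evensOf] at hab
    show evensOf (π.part (2 * a)) = evensOf (π.part (2 * b))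
    have h : π.part (2 * a) = π.part (2 * b) :=
      π.part_eq_of_mem (π.part_mem.2 (mem2_of_mem1 hb).1) hab
    rw [h]

theorem part_P1of {π : Finpartition (Icc 1 (2 * m))} {i : ℕ} (hi : i ∈ Icc 1 m) :
    (P1of π).part i = evensOf (π.part (2 * i)) :=
  part_ofClassFun _ _ _ _ _ hi

theorem P1of_parts_form {π : Finpartition (Icc 1 (2 * m))} {B : Finset ℕ}
    (hB : B ∈ (P1of π).parts) : ∃ F ∈ π.parts, B = evensOf F := by
  rw [P1of, parts_ofClassFun] at hB
  obtain ⟨i, hi, rfl⟩ := mem_image.1 hB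
  exact ⟨π.part (2 * i), π.part_mem.2 (mem2_of_mem1 hi).1, rfl⟩

theorem P1of_card {q : ℕ} {π : Finpartition (Icc 1 (2 * m))} (hNC : IsNoncrossing π)
    (hcard : ∀ B ∈ π.parts, B.card = 2 * q) {B : Finset ℕ} (hB : B ∈ (P1of π).parts) :
    B.card = q := by
  obtain ⟨F, hF, rfl⟩ := P1of_parts_form hB
  unfold evensOf
  rw [Finset.card_image_of_injOn, card_evens hNC hcard hF]
  intro x hx y hy hxy
  rw [mem_coe, mem_filter] at hx hy
  have hxy' : x / 2 = y / 2 := hxy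
  omega

theorem P1of_noncrossing {π : Finpartition (Icc 1 (2 * m))} (hNC : IsNoncrossing π) :
    IsNoncrossing (P1of π) := by
  intro a b c d hab hbc hcd B₁ hB₁ B₂ hB₂ ha hc hb hd
  obtain ⟨F₁, hF₁, rfl⟩ := P1of_parts_form hB₁
  obtain ⟨F₂, hF₂, rfl⟩ := P1of_parts_form hB₂
  rw [mem_evensOf] at ha hc hb hd
  have h := hNC (2 * a) (2 * b) (2 * c) (2 * d) (by omega) (by omega) (by omega)
    F₁ hF₁ F₂ hF₂ ha hc hb hd
  rw [h]

theorem eqvgen_eq {r : ℕ → ℕ → Prop} (f : ℕ → Finset ℕ)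
    (hstep : ∀ a b, r a b → f a = f b) {i j : ℕ} (h : Relation.EqvGen r i j) : f i = f j := by
  induction h with
  | rel a b hab => exact hstep a b hab
  | refl a => rfl
  | symm a b _ ih => exact ih.symm
  | trans a b c _ _ ih1 ih2 => exact ih1.trans ih2

theorem P2of_parts_form {π : Finpartition (Icc 1 (2 * m))} {C : Finset ℕ}
    (hC : C ∈ (P2of π).parts) : ∃ i ∈ Icc 1 m, C = cls π i := by
  rw [P2of, parts_ofClassFun] at hC
  obtain ⟨i, hi, rfl⟩ := mem_image.1 hC
  exact ⟨i, hi, rfl⟩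

theorem P2of_noncrossing {q : ℕ} {π : Finpartition (Icc 1 (2 * m))} (hNC : IsNoncrossing π)
    (hcard : ∀ B ∈ π.parts, B.card = 2 * q) (hq : 0 < q) :
    IsNoncrossing (P2of π) := by
  intro a b c d hab hbc hcd C hC C' hC' ha hc hb hd
  by_cases hCC : C = C'
  · exact hCC
  exfalso
  have hCsub : C ⊆ Icc 1 m := (P2of π).le hC
  have hC'sub : C' ⊆ Icc 1 m := (P2of π).le hC'
  have ham := hCsub ha
  have hcm := hCsub hc
  have hbm := hC'sub hb
  have hdm := hC'sub hd
  have hcC' : c ∉ C' := fun h => hCC ((P2of π).eq_of_mem_parts hC hC' hc h)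
  -- u' : smallest element of C' above c
  have hu'ne : (C'.filter (fun x => c < x)).Nonempty := ⟨d, mem_filter.2 ⟨hd, by omega⟩⟩
  set u' := (C'.filter (fun x => c < x)).min' hu'ne with hu'def
  have hu' : u' ∈ C' ∧ c < u' := by
    have := (C'.filter (fun x => c < x)).min'_mem hu'ne
    rw [mem_filter] at this
    exact this
  have hu'min : ∀ z ∈ C', c < z → u' ≤ z := by
    intro z hz hcz
    exact Finset.min'_le _ z (mem_filter.2 ⟨hz, hcz⟩)
  have hu'm : u' ∈ Icc 1 m := hC'sub hu'.1
  have hpartu' : (P2of π).part u' = C' := (P2of π).part_eq_of_mem hC' hu'.1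
  -- v' := pred u'
  have hfneu' : (((P2of π).part u').filter (· < u')).Nonempty := by
    rw [hpartu']
    exact ⟨b, mem_filter.2 ⟨hb, by omega⟩⟩
  obtain ⟨hv'lt, hv'max⟩ := pred_spec_lt (P2of π) hfneu'
  set v' := pred (P2of π) u' with hv'def
  have hv'C' : v' ∈ C' := by
    rw [← hpartu']
    exact pred_mem (P2of π) hu'm
  have hbv' : b ≤ v' := hv'max b (by rw [hpartu']; exact hb) (by omega)
  have hv'c : v' < c := by
    have hne : v' ≠ c := fun h => hcC' (h ▸ hv'C')
    rcases Nat.lt_or_ge v' c with h | h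
    · exact h
    · have : c < v' := by omega
      have := hu'min v' hv'C' this
      omega
  -- u₂ : smallest element of C above v'
  have hu₂ne : (C.filter (fun x => v' < x)).Nonempty := ⟨c, mem_filter.2 ⟨hc, by omega⟩⟩
  set u₂ := (C.filter (fun x => v' < x)).min' hu₂ne with hu₂def
  have hu₂ : u₂ ∈ C ∧ v' < u₂ := by
    have := (C.filter (fun x => v' < x)).min'_mem hu₂ne
    rw [mem_filter] at this
    exact this
  have hu₂min : ∀ z ∈ C, v' < z → u₂ ≤ z := by
    intro z hz hvz
    exact Finset.min'_le _ z (mem_filter.2 ⟨hz, hvz⟩)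
  have hu₂c : u₂ ≤ c := hu₂min c hc (by omega)
  have hu₂m : u₂ ∈ Icc 1 m := hCsub hu₂.1
  have hpartu₂ : (P2of π).part u₂ = C := (P2of π).part_eq_of_mem hC hu₂.1
  -- v₂ := pred u₂
  have hfneu₂ : (((P2of π).part u₂).filter (· < u₂)).Nonempty := by
    rw [hpartu₂]
    refine ⟨a, mem_filter.2 ⟨ha, by omega⟩⟩
  obtain ⟨hv₂lt, hv₂max⟩ := pred_spec_lt (P2of π) hfneu₂
  set v₂ := pred (P2of π) u₂ with hv₂def
  have hv₂C : v₂ ∈ C := by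
    rw [← hpartu₂]
    exact pred_mem (P2of π) hu₂m
  have hv₂v' : v₂ < v' := by
    have hne : v₂ ≠ v' := fun h => hCC ((P2of π).eq_of_mem_parts hC hC' hv₂C (h ▸ hv'C'))
    rcases Nat.lt_or_ge v₂ v' with h | h
    · exact h
    · have : v' < v₂ := by omega
      have := hu₂min v₂ hv₂C this
      omega
  -- π-crossing
  have hSL2 : 2 * v₂ ∈ π.part (2 * u₂ - 1) := SL hNC hcard hq hu₂m
  have hSL' : 2 * v' ∈ π.part (2 * u' - 1) := SL hNC hcard hq hu'm
  have hu₂1 : 1 ≤ u₂ := (mem_Icc.1 hu₂m).1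
  have hu'1 : 1 ≤ u' := (mem_Icc.1 hu'm).1
  have hcross := hNC (2 * v₂) (2 * v') (2 * u₂ - 1) (2 * u' - 1)
    (by omega) (by omega) (by omega)
    (π.part (2 * u₂ - 1)) (π.part_mem.2 (mem2_of_mem1 hu₂m).2)
    (π.part (2 * u' - 1)) (π.part_mem.2 (mem2_of_mem1 hu'm).2)
    hSL2 (π.mem_part (mem2_of_mem1 hu₂m).2) hSL' (π.mem_part (mem2_of_mem1 hu'm).2)
  -- conclude u₂ and u' are linked, contradiction
  have hlink : 2 * u' - 1 ∈ π.part (2 * u₂ - 1) := by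
    rw [hcross]
    exact π.mem_part (mem2_of_mem1 hu'm).2
  have hgen : Relation.EqvGen (rRel π) u₂ u' :=
    lift_linked hNC hcard hq hu₂m hu'm (Or.inr (Or.inr (Or.inr hlink)))
  have : C = C' := by
    rw [← hpartu₂, ← hpartu', part_P2of hu₂m, part_P2of hu'm]
    exact cls_eq_of_gen hgen
  exact hCC this

theorem P1of_refines {q : ℕ} {π : Finpartition (Icc 1 (2 * m))} (hNC : IsNoncrossing π)
    (hcard : ∀ B ∈ π.parts, B.card = 2 * q) (hq : 0 < q) :
    Refines (P1of π) (P2of π) := by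
  intro B hB
  have hBsub : B ⊆ Icc 1 m := (P1of π).le hB
  rw [P1of, parts_ofClassFun] at hB
  obtain ⟨i, hi, rfl⟩ := mem_image.1 hB
  refine ⟨cls π i, ?_, ?_⟩
  · rw [P2of, parts_ofClassFun]
    exact mem_image_of_mem _ hi
  · intro j hj
    have hjm : j ∈ Icc 1 m := hBsub hj
    rw [mem_evensOf] at hj
    rw [mem_cls]
    exact ⟨hjm, lift_linked hNC hcard hq hi hjm (Or.inl hj)⟩

/-! ### The two compositions -/

theorem fodd_evensOf {q : ℕ} {π : Finpartition (Icc 1 (2 * m))} (hNC : IsNoncrossing π)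
    (hcard : ∀ B ∈ π.parts, B.card = 2 * q) (hq : 0 < q) {F : Finset ℕ} (hF : F ∈ π.parts) :
    fodd (P2of π) (evensOf F) = F := by
  ext y
  constructor
  · intro hy
    rcases point_cases hy with ⟨b, hb, rfl⟩ | ⟨i, hi, hpi, rfl⟩
    · exact mem_evensOf.1 hb
    · rw [mem_evensOf] at hpi
      have hSL := SL hNC hcard hq hi
      have heq : π.part (2 * i - 1) = F :=
        π.eq_of_mem_parts (π.part_mem.2 (mem2_of_mem1 hi).2) hF hSL hpi
      rw [← heq]
      exact π.mem_part (mem2_of_mem1 hi).2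
  · intro hy
    have hym : y ∈ Icc 1 (2 * m) := π.le hF hy
    obtain ⟨j, hj, hcase | hcase⟩ := mem_Icc2_cases hym
    · subst hcase
      rw [mem_fodd_even, mem_evensOf]
      exact hy
    · have hj1 : 1 ≤ j := (mem_Icc.1 hj).1
      subst hcase
      rw [mem_fodd_odd _ _ hj1, mem_evensOf]
      refine ⟨hj, ?_⟩
      have hSL := SL hNC hcard hq hj
      have heq : π.part (2 * j - 1) = F := π.part_eq_of_mem hF hy
      rw [← heq]
      exact hSL

theorem psi_phi {q : ℕ} {π : Finpartition (Icc 1 (2 * m))} (hNC : IsNoncrossing π)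
    (hcard : ∀ B ∈ π.parts, B.card = 2 * q) (hq : 0 < q) :
    Psi (P1of π) (P2of π) = π := by
  have hpointwise : ∀ x ∈ Icc 1 (2 * m), psiCls (P1of π) (P2of π) x = π.part x := by
    intro x hx
    obtain ⟨i, hi, hcase | hcase⟩ := mem_Icc2_cases hx
    · subst hcase
      rw [psiCls_even, part_P1of hi, fodd_evensOf hNC hcard hq (π.part_mem.2 (mem2_of_mem1 hi).1)]
    · have hi1 : 1 ≤ i := (mem_Icc.1 hi).1
      subst hcase
      rw [psiCls_odd _ _ hi1, part_P1of (pred_mem_Icc (P2of π) hi)]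
      have hSL := SL hNC hcard hq hi
      have heq : π.part (2 * pred (P2of π) i) = π.part (2 * i - 1) :=
        (π.part_eq_of_mem (π.part_mem.2 (mem2_of_mem1 hi).2) hSL)
      rw [heq, fodd_evensOf hNC hcard hq (π.part_mem.2 (mem2_of_mem1 hi).2)]
  ext1
  rw [show (Psi (P1of π) (P2of π)).parts = (Icc 1 (2 * m)).image (psiCls (P1of π) (P2of π))
      from rfl]
  rw [parts_eq_image_part π]
  exact Finset.image_congr hpointwise

theorem evensOf_fodd {Q : Finpartition (Icc 1 m)} {B : Finset ℕ} :
    evensOf (fodd Q B) = B := by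
  ext j
  rw [mem_evensOf, mem_fodd_even]

theorem phi1_psi (P1 Q : Finpartition (Icc 1 m)) : P1of (Psi P1 Q) = P1 := by
  have hpointwise : ∀ i ∈ Icc 1 m,
      evensOf ((Psi P1 Q).part (2 * i)) = P1.part i := by
    intro i hi
    rw [psi_part_even P1 Q hi, evensOf_fodd]
  ext1
  rw [show (P1of (Psi P1 Q)).parts
      = (Icc 1 m).image (fun i => evensOf ((Psi P1 Q).part (2 * i))) from rfl]
  rw [parts_eq_image_part P1]
  exact Finset.image_congr hpointwise

theorem phi2_psi (P1 Q : Finpartition (Icc 1 m)) (href : Refines P1 Q) :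
    P2of (Psi P1 Q) = Q := by
  -- each step of the relation stays within a Q-part
  have hstep : ∀ a b, rRel (Psi P1 Q) a b → Q.part a = Q.part b := by
    rintro a b ⟨ham, hbm, hab | hab⟩
    · rw [psi_part_even P1 Q ham, psi_part_even P1 Q hbm] at hab
      have h1 : P1.part a = P1.part b := by
        rw [← evensOf_fodd (Q := Q) (B := P1.part a), hab, evensOf_fodd]
      have haB : a ∈ P1.part b := h1 ▸ P1.mem_part ham
      have hsub : P1.part b ⊆ Q.part b :=
        refines_part_subset href (P1.part_mem.2 hbm) (P1.mem_part hbm)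
      exact Q.eq_of_mem_parts (Q.part_mem.2 ham) (Q.part_mem.2 hbm) (Q.mem_part ham) (hsub haB)
    · have ha1 : 1 ≤ a := (mem_Icc.1 ham).1
      rw [psi_part_even P1 Q hbm, mem_fodd_odd _ _ ha1] at hab
      have hsub : P1.part b ⊆ Q.part b :=
        refines_part_subset href (P1.part_mem.2 hbm) (P1.mem_part hbm)
      exact Q.eq_of_mem_parts (Q.part_mem.2 ham) (Q.part_mem.2 hbm)
        (pred_mem Q ham) (hsub hab.2)
  -- connectivity : everything in a Q-part is reachable
  have hstep_pred : ∀ l ∈ Icc 1 m, rRel (Psi P1 Q) l (pred Q l) := by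
    intro l hl
    have hpm : pred Q l ∈ Icc 1 m := pred_mem_Icc Q hl
    refine ⟨hl, hpm, Or.inr ?_⟩
    rw [psi_part_even P1 Q hpm, mem_fodd_odd _ _ (mem_Icc.1 hl).1]
    exact ⟨hl, P1.mem_part hpm⟩
  have conn : ∀ l, l ∈ Icc 1 m → ∀ j ∈ Q.part l, j ≤ l →
      Relation.EqvGen (rRel (Psi P1 Q)) l j := by
    intro l
    induction l using Nat.strong_induction_on with
    | _ l IH =>
      intro hl j hj hjl
      rcases eq_or_lt_of_le hjl with rfl | hlt
      · exact Relation.EqvGen.refl j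
      · have hfne : ((Q.part l).filter (· < l)).Nonempty := ⟨j, mem_filter.2 ⟨hj, hlt⟩⟩
        obtain ⟨hplt, hpmax⟩ := pred_spec_lt Q hfne
        have hpm : pred Q l ∈ Icc 1 m := pred_mem_Icc Q hl
        have hppart : Q.part (pred Q l) = Q.part l :=
          Q.part_eq_of_mem (Q.part_mem.2 hl) (pred_mem Q hl)
        have hjp : j ≤ pred Q l := hpmax j hj hlt
        have hj2 : j ∈ Q.part (pred Q l) := by rw [hppart]; exact hj
        exact Relation.EqvGen.trans _ _ _
          (Relation.EqvGen.rel _ _ (hstep_pred l hl))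
          (IH (pred Q l) hplt hpm j hj2 hjp)
  have hcls : ∀ i ∈ Icc 1 m, cls (Psi P1 Q) i = Q.part i := by
    intro i hi
    ext j
    rw [mem_cls]
    constructor
    · rintro ⟨hjm, hgen⟩
      have := eqvgen_eq (Q.part) hstep hgen
      rw [this]
      exact Q.mem_part hjm
    · intro hj
      have hjm : j ∈ Icc 1 m := Q.le (Q.part_mem.2 hi) hj
      rcases le_or_gt j i with h | h
      · exact ⟨hjm, conn i hi j hj h⟩
      · have hpart : Q.part j = Q.part i := Q.part_eq_of_mem (Q.part_mem.2 hi) hj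
        have hi2 : i ∈ Q.part j := by rw [hpart]; exact Q.mem_part hi
        exact ⟨hjm, Relation.EqvGen.symm _ _ (conn j hjm i hi2 (by omega))⟩
  ext1
  rw [show (P2of (Psi P1 Q)).parts = (Icc 1 m).image (cls (Psi P1 Q)) from rfl]
  rw [parts_eq_image_part Q]
  exact Finset.image_congr hcls

theorem psi_card {q : ℕ} {P1 Q : Finpartition (Icc 1 m)} (href : Refines P1 Q)
    (hcard : ∀ B ∈ P1.parts, B.card = q) {F : Finset ℕ} (hF : F ∈ (Psi P1 Q).parts) :
    F.card = 2 * q := by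
  obtain ⟨B, hB, rfl⟩ := psi_parts_form hF
  rw [card_fodd href hB, hcard B hB]

end
end NCbij

/-- For every positive `q` and every `n`, there is a bijection between noncrossing
partitions of `{1,…,2qn}` with all blocks of exactly `2q` elements, and pairs `(P₁, P₂)`
where `P₁` is a noncrossing partition of `{1,…,qn}` with all blocks of exactly `q` elements,
`P₂` is a noncrossing partition of `{1,…,qn}`, and `P₁` refines `P₂`. -/
theorem bijection_2q_partitions_double_partitions (q : ℕ) (hq : 0 < q) (n : ℕ) :
    Nonempty
      ({P : Finpartition (Finset.Icc 1 (2 * q * n)) //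
          IsNoncrossing P ∧ ∀ B ∈ P.parts, B.card = 2 * q} ≃
        {PP : Finpartition (Finset.Icc 1 (q * n)) × Finpartition (Finset.Icc 1 (q * n)) //
          IsNoncrossing PP.1 ∧ (∀ B ∈ PP.1.parts, B.card = q) ∧
          IsNoncrossing PP.2 ∧ Refines PP.1 PP.2}) := by
  rw [mul_assoc]
  refine ⟨{
    toFun := fun P => ⟨(NCbij.P1of P.1, NCbij.P2of P.1),
      NCbij.P1of_noncrossing P.2.1,
      fun B hB => NCbij.P1of_card P.2.1 P.2.2 hB,
      NCbij.P2of_noncrossing P.2.1 P.2.2 hq,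
      NCbij.P1of_refines P.2.1 P.2.2 hq⟩
    invFun := fun PP => ⟨NCbij.Psi PP.1.1 PP.1.2,
      NCbij.psi_noncrossing _ _ PP.2.1 PP.2.2.2.1 PP.2.2.2.2,
      fun F hF => NCbij.psi_card PP.2.2.2.2 PP.2.2.1 hF⟩
    left_inv := fun P => Subtype.ext (NCbij.psi_phi P.2.1 P.2.2 hq)
    right_inv := fun PP => Subtype.ext
      (Prod.ext (NCbij.phi1_psi _ _) (NCbij.phi2_psi _ _ PP.2.2.2.2)) }⟩
end

section
/- For every integer p ≥ 2 and every natural number n, there is a bijection between the set of noncrossing partitions of {1,…,pn} all of whose blocks have exactly p elements, and the set of ordered rooted trees with n internal nodes in which every node has either 0 or exactly p children (full p-ary plane trees). -/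
/-- A full `p`-ary plane tree: every node has either `0` or exactly `p` ordered children. -/
inductive PTree (p : ℕ) : Type
  | leaf : PTree p
  | node : (Fin p → PTree p) → PTree p

/-- The number of internal nodes (nodes with `p` children) of a full `p`-ary plane tree. -/
def PTree.internalNodes {p : ℕ} : PTree p → ℕ
  | .leaf => 0
  | .node f => 1 + ∑ i : Fin p, (f i).internalNodes

abbrev NCP (p : ℕ) (s : Finset ℕ) :=
  {P : Finpartition s // IsNoncrossing P ∧ ∀ B ∈ P.parts, B.card = p}

open Finset

/-- Map a finpartition of `s : Finset ℕ` along a function injective on `s`. -/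
def Finpartition.imageMap {s t : Finset ℕ} (P : Finpartition s) (f : ℕ → ℕ)
    (hinj : Set.InjOn f s) (himg : s.image f = t) : Finpartition t where
  parts := P.parts.image (Finset.image f)
  supIndep := by
    rw [Finset.supIndep_iff_pairwiseDisjoint]
    intro a ha b hb hab
    simp only [coe_image, Set.mem_image, mem_coe] at ha hb
    obtain ⟨A, hA, rfl⟩ := ha
    obtain ⟨B, hB, rfl⟩ := hb
    have hAB : A ≠ B := fun h => hab (by rw [h])
    have hd := P.disjoint hA hB hAB
    simp only [Function.onFun, id_eq] at hd ⊢
    rw [Finset.disjoint_left] at hd ⊢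
    rintro x hx hx'
    simp only [id_eq, Finset.mem_image] at hx hx'
    obtain ⟨u, hu, rfl⟩ := hx
    obtain ⟨v, hv, hvu⟩ := hx'
    have : v = u := hinj (P.le hB hv) (P.le hA hu) hvu
    exact hd hu (this ▸ hv)
  sup_parts := by
    rw [← himg]
    ext x
    rw [Finset.mem_sup]
    constructor
    · rintro ⟨A, hA, hx⟩
      rw [Finset.mem_image] at hA
      obtain ⟨B, hB, rfl⟩ := hA
      rw [id_eq, Finset.mem_image] at hx
      obtain ⟨u, hu, rfl⟩ := hx
      refine Finset.mem_image_of_mem f ?_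
      rw [← P.sup_parts, Finset.mem_sup]
      exact ⟨B, hB, hu⟩
    · intro hx
      rw [Finset.mem_image] at hx
      obtain ⟨u, hu, rfl⟩ := hx
      rw [← P.sup_parts, Finset.mem_sup] at hu
      obtain ⟨B, hB, hu⟩ := hu
      exact ⟨B.image f, Finset.mem_image_of_mem _ hB, Finset.mem_image_of_mem f hu⟩
  bot_notMem := by
    intro h
    simp only [Finset.bot_eq_empty, Finset.mem_image] at h
    obtain ⟨A, hA, hAe⟩ := h
    rw [Finset.image_eq_empty] at hAe
    exact P.bot_notMem (by rwa [hAe] at hA)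

@[simp] lemma Finpartition.imageMap_parts {s t : Finset ℕ} (P : Finpartition s) (f : ℕ → ℕ)
    (hinj : Set.InjOn f s) (himg : s.image f = t) :
    (P.imageMap f hinj himg).parts = P.parts.image (Finset.image f) := rfl

/-- Map `NCP` along a strictly monotone (on `s`) function. -/
lemma monoInjOn {s : Finset ℕ} {f : ℕ → ℕ}
    (hmono : ∀ a ∈ s, ∀ b ∈ s, a < b → f a < f b) : Set.InjOn f s := by
  intro a ha b hb hab
  rcases lt_trichotomy a b with h | h | h
  · exact absurd hab (hmono a ha b hb h).ne
  · exact h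
  · exact absurd hab.symm (hmono b hb a ha h).ne

def ncpMap (p : ℕ) {s t : Finset ℕ} (f : ℕ → ℕ)
    (hmono : ∀ a ∈ s, ∀ b ∈ s, a < b → f a < f b) (himg : s.image f = t) :
    NCP p s → NCP p t := fun x =>
  ⟨x.1.imageMap f (monoInjOn hmono) himg, by
  obtain ⟨P, hnc, hcard⟩ := x
  have hinj : Set.InjOn f s := monoInjOn hmono
  refine ⟨?_, ?_⟩
  · intro a b c d hab hbc hcd B₁ hB₁ B₂ hB₂ ha hc hb hd
    simp only [Finpartition.imageMap_parts, Finset.mem_image] at hB₁ hB₂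
    obtain ⟨A₁, hA₁, rfl⟩ := hB₁
    obtain ⟨A₂, hA₂, rfl⟩ := hB₂
    simp only [Finset.mem_image] at ha hb hc hd
    obtain ⟨a', ha', rfl⟩ := ha
    obtain ⟨b', hb', rfl⟩ := hb
    obtain ⟨c', hc', rfl⟩ := hc
    obtain ⟨d', hd', rfl⟩ := hd
    have hsa := P.le hA₁ ha'
    have hsb := P.le hA₂ hb'
    have hsc := P.le hA₁ hc'
    have hsd := P.le hA₂ hd'
    have lt1 : a' < b' := by
      rcases lt_trichotomy a' b' with h | h | h
      · exact h
      · exact absurd (h ▸ rfl) hab.ne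
      · exact absurd (hmono b' hsb a' hsa h) (by omega)
    have lt2 : b' < c' := by
      rcases lt_trichotomy b' c' with h | h | h
      · exact h
      · exact absurd (h ▸ rfl) hbc.ne
      · exact absurd (hmono c' hsc b' hsb h) (by omega)
    have lt3 : c' < d' := by
      rcases lt_trichotomy c' d' with h | h | h
      · exact h
      · exact absurd (h ▸ rfl) hcd.ne
      · exact absurd (hmono d' hsd c' hsc h) (by omega)
    rw [hnc a' b' c' d' lt1 lt2 lt3 A₁ hA₁ A₂ hA₂ ha' hc' hb' hd']
  · intro B hB
    simp only [Finpartition.imageMap_parts, Finset.mem_image] at hB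
    obtain ⟨A, hA, rfl⟩ := hB
    rw [Finset.card_image_of_injOn (hinj.mono (P.le hA))]
    exact hcard A hA⟩

@[simp] lemma ncpMap_parts (p : ℕ) {s t : Finset ℕ} (f : ℕ → ℕ)
    (hmono : ∀ a ∈ s, ∀ b ∈ s, a < b → f a < f b) (himg : s.image f = t) (P : NCP p s) :
    (ncpMap p f hmono himg P).1.parts = P.1.parts.image (Finset.image f) := rfl

lemma image_add_Icc (c a b : ℕ) : (Finset.Icc a b).image (· + c) = Finset.Icc (c + a) (c + b) := by
  ext x
  simp only [Finset.mem_image, Finset.mem_Icc]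
  constructor
  · rintro ⟨y, ⟨h1, h2⟩, rfl⟩; omega
  · intro h; exact ⟨x - c, by omega, by omega⟩

lemma image_sub_Icc (c a b : ℕ) : (Finset.Icc (c + a) (c + b)).image (· - c) = Finset.Icc a b := by
  ext x
  simp only [Finset.mem_image, Finset.mem_Icc]
  constructor
  · rintro ⟨y, ⟨h1, h2⟩, rfl⟩; omega
  · intro h; exact ⟨x + c, by omega, by omega⟩

lemma mono_add (c : ℕ) {s : Finset ℕ} : ∀ a ∈ s, ∀ b ∈ s, a < b → a + c < b + c :=
  fun a _ b _ h => by omega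

lemma mono_sub (c m : ℕ) : ∀ a ∈ Finset.Icc (c + 1) (c + m), ∀ b ∈ Finset.Icc (c + 1) (c + m),
    a < b → a - c < b - c := by
  intro a ha b hb h
  rw [Finset.mem_Icc] at ha hb
  omega

/-- Shifting a noncrossing `p`-partition of `Icc 1 m` by `c`. -/
def shiftNCP (p c m : ℕ) : NCP p (Finset.Icc 1 m) ≃ NCP p (Finset.Icc (c + 1) (c + m)) where
  toFun := ncpMap p (· + c) (mono_add c) (image_add_Icc c 1 m)
  invFun := ncpMap p (· - c) (mono_sub c m) (image_sub_Icc c 1 m)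
  left_inv := by
    rintro ⟨P, hP⟩
    apply Subtype.ext
    apply Finpartition.ext
    rw [ncpMap_parts, ncpMap_parts, Finset.image_image]
    rw [show ((Finset.image (· - c)) ∘ (Finset.image (· + c))) = fun A => (A.image (· + c)).image (· - c) from rfl]
    have h1 : ∀ A ∈ P.parts, (A.image (· + c)).image (· - c) = A := by
      intro A hA
      rw [Finset.image_image]
      have : Set.EqOn ((· - c) ∘ (· + c)) id A := by
        intro x _; simp
      rw [Finset.image_congr this, Finset.image_id]
    rw [Finset.image_congr (fun A hA => h1 A hA)]
    exact Finset.image_id'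
  right_inv := by
    rintro ⟨P, hP⟩
    apply Subtype.ext
    apply Finpartition.ext
    rw [ncpMap_parts, ncpMap_parts, Finset.image_image]
    rw [show ((Finset.image (· + c)) ∘ (Finset.image (· - c))) = fun A => (A.image (· - c)).image (· + c) from rfl]
    have h1 : ∀ A ∈ P.parts, (A.image (· - c)).image (· + c) = A := by
      intro A hA
      rw [Finset.image_image]
      have : Set.EqOn ((· + c) ∘ (· - c)) id A := by
        intro x hx
        have := P.le hA hx
        rw [Finset.mem_coe, Finset.mem_Icc] at *
        simp only [Function.comp, id_eq]
        omega
      rw [Finset.image_congr this, Finset.image_id]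
    rw [Finset.image_congr (fun A hA => h1 A hA)]
    exact Finset.image_id'

@[simp] lemma shiftNCP_parts (p c m : ℕ) (P : NCP p (Finset.Icc 1 m)) :
    ((shiftNCP p c m) P).1.parts = P.1.parts.image (Finset.image (· + c)) := rfl

@[simp] lemma shiftNCP_symm_parts (p c m : ℕ) (P : NCP p (Finset.Icc (c + 1) (c + m))) :
    ((shiftNCP p c m).symm P).1.parts = P.1.parts.image (Finset.image (· - c)) := rfl

section Trees

variable {p : ℕ}

abbrev TT (p n : ℕ) := {t : PTree p // t.internalNodes = n}

lemma PTree.internal_leaf : (PTree.leaf : PTree p).internalNodes = 0 := rfl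

lemma PTree.internal_node (g : Fin p → PTree p) :
    (PTree.node g).internalNodes = 1 + ∑ i : Fin p, (g i).internalNodes := rfl

lemma eq_leaf_of_internal_zero (t : PTree p) (h : t.internalNodes = 0) : t = PTree.leaf := by
  cases t with
  | leaf => rfl
  | node g => rw [PTree.internal_node] at h; omega

instance TT.unique0 : Unique (TT p 0) where
  default := ⟨PTree.leaf, rfl⟩
  uniq := fun ⟨t, ht⟩ => Subtype.ext (eq_leaf_of_internal_zero t ht)

private lemma sigma_tree_eta (x : Σ m : ℕ, TT p m) :
    (⟨x.2.1.internalNodes, x.2.1, rfl⟩ : Σ m : ℕ, TT p m) = x := by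
  obtain ⟨m, t, ht⟩ := x
  subst ht
  rfl

def treeDecToFun (n : ℕ) : (t : PTree p) → t.internalNodes = n + 1 →
    {f : Fin p → Σ m : ℕ, TT p m // ∑ i, (f i).1 = n}
  | .leaf, h => absurd h (by rw [PTree.internal_leaf]; omega)
  | .node g, h => ⟨fun i => ⟨(g i).internalNodes, g i, rfl⟩, by
      rw [PTree.internal_node] at h
      simp only []
      omega⟩

def treeDec (p n : ℕ) : TT p (n + 1) ≃ {f : Fin p → Σ m : ℕ, TT p m // ∑ i, (f i).1 = n} where
  toFun := fun t => treeDecToFun n t.1 t.2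
  invFun := fun f => ⟨PTree.node (fun i => (f.1 i).2.1), by
    rw [PTree.internal_node]
    have : ∀ i, ((f.1 i).2.1).internalNodes = (f.1 i).1 := fun i => (f.1 i).2.2
    simp only [this]
    rw [f.2]; omega⟩
  left_inv := by
    rintro ⟨t, ht⟩
    cases t with
    | leaf => exact absurd ht (by rw [PTree.internal_leaf]; omega)
    | node g => rfl
  right_inv := by
    rintro ⟨f, hf⟩
    apply Subtype.ext
    funext i
    exact sigma_tree_eta (f i)

end Trees
open Finset

section Seg

variable {A : ℕ → ℕ} {p N : ℕ}

lemma seg_cover (h0 : A 0 = 1) (hAp : A p = N + 1)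
    (hmono : ∀ i j, i < j → j ≤ p → A i < A j) (hp : 0 < p) {x : ℕ}
    (hx1 : 1 ≤ x) (hxN : x ≤ N) (hxB : ∀ j, j < p → A j ≠ x) :
    ∃ i, i < p ∧ A i < x ∧ x < A (i + 1) := by
  have h0x : A 0 < x := by
    have := hxB 0 hp
    omega
  have hispec : A (Nat.findGreatest (fun j => A j < x) p) < x :=
    Nat.findGreatest_spec (P := fun j => A j < x) (Nat.zero_le p) h0x
  have hile : Nat.findGreatest (fun j => A j < x) p ≤ p := Nat.findGreatest_le p
  set i := Nat.findGreatest (fun j => A j < x) p with hi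
  have hip : i < p := by
    by_contra h
    have hieq : i = p := by omega
    rw [hieq, hAp] at hispec
    omega
  have hgt : ¬ (A (i + 1) < x) := by
    rcases Nat.lt_or_ge (i + 1) p with hcase | hcase
    · exact Nat.findGreatest_is_greatest (P := fun j => A j < x) (n := p) (by omega) (by omega)
    · have heq : i + 1 = p := by omega
      rw [heq, hAp]
      omega
  rw [not_lt] at hgt
  refine ⟨i, hip, hispec, ?_⟩
  rcases Nat.lt_or_ge (i + 1) p with h | h
  · have := hxB (i + 1) h
    omega
  · have heq : i + 1 = p := by omega
    have := congrArg A heq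
    rw [hAp] at this
    omega

lemma seg_unique (hmono : ∀ i j, i < j → j ≤ p → A i < A j) {i j x : ℕ}
    (hi : i < p) (hj : j < p) (h1 : A i < x) (h2 : x < A (i + 1))
    (h3 : A j < x) (h4 : x < A (j + 1)) : i = j := by
  rcases lt_trichotomy i j with h | h | h
  · have : A (i + 1) ≤ A j := by
      rcases Nat.lt_or_ge (i + 1) j with h' | h'
      · exact (hmono _ _ h' (by omega)).le
      · exact le_of_eq (congrArg A (by omega))
    omega
  · exact h
  · have : A (j + 1) ≤ A i := by
      rcases Nat.lt_or_ge (j + 1) i with h' | h'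
      · exact (hmono _ _ h' (by omega)).le
      · exact le_of_eq (congrArg A (by omega))
    omega

end Seg

section Decomp

lemma one_mem_S (p n : ℕ) (hp : 0 < p) : (1 : ℕ) ∈ Finset.Icc 1 (p * (n + 1)) := by
  rw [Finset.mem_Icc]
  refine ⟨le_refl 1, ?_⟩
  have : 1 * 1 ≤ p * (n + 1) := Nat.mul_le_mul hp (by omega)
  omega

def decompB (p n : ℕ) (hp : 0 < p) (X : NCP p (Finset.Icc 1 (p * (n + 1)))) : Finset ℕ := X.1.part 1

lemma decompB_mem (p n : ℕ) (hp : 0 < p) (X : NCP p (Finset.Icc 1 (p * (n + 1)))) : decompB p n hp X ∈ X.1.parts := X.1.part_mem.mpr (one_mem_S p n hp)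

lemma decompB_card (p n : ℕ) (hp : 0 < p) (X : NCP p (Finset.Icc 1 (p * (n + 1)))) : (decompB p n hp X).card = p :=
  X.2.2 _ (decompB_mem p n hp X)

lemma one_mem_decompB (p n : ℕ) (hp : 0 < p) (X : NCP p (Finset.Icc 1 (p * (n + 1)))) : 1 ∈ decompB p n hp X := X.1.mem_part (one_mem_S p n hp)

/-- The increasing enumeration of the block of `1`, padded with `N+1`. -/
def decompA (p n : ℕ) (hp : 0 < p) (X : NCP p (Finset.Icc 1 (p * (n + 1)))) : ℕ → ℕ := fun j =>
  if h : j < p then ((decompB p n hp X).orderEmbOfFin (decompB_card p n hp X) ⟨j, h⟩ : ℕ)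
  else p * (n + 1) + 1

lemma decompA_mem (p n : ℕ) (hp : 0 < p) (X : NCP p (Finset.Icc 1 (p * (n + 1)))) {j : ℕ} (hj : j < p) : decompA p n hp X j ∈ decompB p n hp X := by
  simp only [decompA]
  rw [dif_pos hj]
  exact Finset.orderEmbOfFin_mem _ _ _

lemma decompB_subset_S (p n : ℕ) (hp : 0 < p) (X : NCP p (Finset.Icc 1 (p * (n + 1)))) : decompB p n hp X ⊆ Finset.Icc 1 (p * (n + 1)) :=
  X.1.le (decompB_mem p n hp X)

lemma decompA_le_N (p n : ℕ) (hp : 0 < p) (X : NCP p (Finset.Icc 1 (p * (n + 1)))) {j : ℕ} (hj : j < p) : decompA p n hp X j ≤ p * (n + 1) := by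
  have := decompB_subset_S p n hp X (decompA_mem p n hp X hj)
  rw [Finset.mem_Icc] at this
  exact this.2

lemma decompA_pos (p n : ℕ) (hp : 0 < p) (X : NCP p (Finset.Icc 1 (p * (n + 1)))) (j : ℕ) : 1 ≤ decompA p n hp X j := by
  rcases Nat.lt_or_ge j p with h | h
  · have := decompB_subset_S p n hp X (decompA_mem p n hp X h)
    rw [Finset.mem_Icc] at this
    exact this.1
  · simp only [decompA]
    rw [dif_neg (by omega)]
    omega

lemma decompA_mono (p n : ℕ) (hp : 0 < p) (X : NCP p (Finset.Icc 1 (p * (n + 1)))) : ∀ i j, i < j → j ≤ p → decompA p n hp X i < decompA p n hp X j := by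
  intro i j hij hjp
  rcases Nat.lt_or_ge j p with h | h
  · simp only [decompA]
    rw [dif_pos (by omega : i < p), dif_pos h]
    have := ((decompB p n hp X).orderEmbOfFin (decompB_card p n hp X)).strictMono
      (show (⟨i, by omega⟩ : Fin p) < ⟨j, h⟩ from by rw [Fin.lt_def]; exact hij)
    exact_mod_cast this
  · have hjp' : j = p := by omega
    have h1 : decompA p n hp X i ≤ p * (n + 1) := decompA_le_N p n hp X (by omega)
    have h2 : decompA p n hp X j = p * (n + 1) + 1 := by
      simp only [decompA]
      rw [dif_neg (by omega)]
    omega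

lemma decompA_surj (p n : ℕ) (hp : 0 < p) (X : NCP p (Finset.Icc 1 (p * (n + 1)))) {b : ℕ} (hb : b ∈ decompB p n hp X) :
    ∃ j, j < p ∧ decompA p n hp X j = b := by
  have : b ∈ Set.range ((decompB p n hp X).orderEmbOfFin (decompB_card p n hp X)) := by
    rw [Finset.range_orderEmbOfFin]
    exact_mod_cast hb
  obtain ⟨⟨j, hj⟩, hjb⟩ := this
  refine ⟨j, hj, ?_⟩
  simp only [decompA]
  rw [dif_pos hj]
  exact_mod_cast hjb

lemma decompA_zero (p n : ℕ) (hp : 0 < p) (X : NCP p (Finset.Icc 1 (p * (n + 1)))) : decompA p n hp X 0 = 1 := by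
  obtain ⟨j, hj, hjeq⟩ := decompA_surj p n hp X (one_mem_decompB p n hp X)
  rcases Nat.eq_zero_or_pos j with h | h
  · rw [← hjeq, h]
  · have h1 := decompA_mono p n hp X 0 j h (by omega)
    have h2 := decompA_pos p n hp X 0
    omega

lemma decompA_p (p n : ℕ) (hp : 0 < p) (X : NCP p (Finset.Icc 1 (p * (n + 1)))) : decompA p n hp X p = p * (n + 1) + 1 := by
  simp only [decompA]
  rw [dif_neg (lt_irrefl p)]

end Decomp
section Decomp2

variable (p n : ℕ) (hp : 0 < p) (X : NCP p (Finset.Icc 1 (p * (n + 1))))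

/-- The `i`-th gap between consecutive elements of the block of 1. -/
def segR (i : ℕ) : Finset ℕ :=
  Finset.Icc (decompA p n hp X i + 1) (decompA p n hp X (i + 1) - 1)

lemma mem_segR {i x : ℕ} (hi : i < p) :
    x ∈ segR p n hp X i ↔ decompA p n hp X i < x ∧ x < decompA p n hp X (i + 1) := by
  rw [segR, Finset.mem_Icc]
  have := decompA_pos p n hp X (i + 1)
  omega

lemma segR_subset_S {i : ℕ} (hi : i < p) :
    segR p n hp X i ⊆ Finset.Icc 1 (p * (n + 1)) := by
  intro x hx
  rw [mem_segR p n hp X hi] at hx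
  have h1 := decompA_pos p n hp X i
  have h2 : decompA p n hp X (i + 1) ≤ p * (n + 1) + 1 := by
    rcases Nat.lt_or_ge (i + 1) p with h | h
    · have := decompA_le_N p n hp X h
      omega
    · have : i + 1 = p := by omega
      rw [this, decompA_p]
  rw [Finset.mem_Icc]
  omega

lemma segR_not_mem_B {i x : ℕ} (hi : i < p) (hx : x ∈ segR p n hp X i) :
    x ∉ decompB p n hp X := by
  intro hxB
  rw [mem_segR p n hp X hi] at hx
  obtain ⟨j, hj, hjeq⟩ := decompA_surj p n hp X hxB
  subst hjeq
  rcases lt_trichotomy j i with h | h | h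
  · have := decompA_mono p n hp X j i h (by omega)
    omega
  · subst h
    omega
  · have : i + 1 ≤ j := by omega
    rcases Nat.lt_or_ge (i + 1) j with h' | h'
    · have := decompA_mono p n hp X (i + 1) j h' (by omega)
      omega
    · have : i + 1 = j := by omega
      subst this
      omega

lemma segR_disjoint {i j : ℕ} (hi : i < p) (hj : j < p) (hij : i ≠ j) :
    Disjoint (segR p n hp X i) (segR p n hp X j) := by
  rw [Finset.disjoint_left]
  intro x hxi hxj
  rw [mem_segR p n hp X hi] at hxi
  rw [mem_segR p n hp X hj] at hxj
  exact hij (seg_unique (decompA_mono p n hp X) hi hj hxi.1 hxi.2 hxj.1 hxj.2)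

/-- Any block other than the block of 1 is contained in a single gap. -/
lemma block_subset_segR {C : Finset ℕ} (hC : C ∈ X.1.parts) (hCB : C ≠ decompB p n hp X) :
    ∃ i, i < p ∧ C ⊆ segR p n hp X i := by
  have hCne : C.Nonempty := X.1.nonempty_of_mem_parts hC
  have hnotB : ∀ y ∈ C, y ∉ decompB p n hp X := by
    intro y hy hyB
    exact hCB (X.1.eq_of_mem_parts hC (decompB_mem p n hp X) hy hyB)
  have hcov : ∀ y ∈ C, ∃ i, i < p ∧ decompA p n hp X i < y ∧ y < decompA p n hp X (i + 1) := by
    intro y hy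
    have hyS := X.1.le hC hy
    rw [Finset.mem_Icc] at hyS
    refine seg_cover (decompA_zero p n hp X) (decompA_p p n hp X)
      (decompA_mono p n hp X) hp hyS.1 hyS.2 ?_
    intro j hj hjy
    exact hnotB y hy (hjy ▸ decompA_mem p n hp X hj)
  obtain ⟨x₀, hx₀⟩ := hCne
  obtain ⟨i, hi, hx₀i⟩ := hcov x₀ hx₀
  refine ⟨i, hi, ?_⟩
  intro y hy
  obtain ⟨j, hj, hyj⟩ := hcov y hy
  rw [mem_segR p n hp X hi]
  suffices hij : j = i by
    rw [← hij]; exact hyj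
  by_contra hij
  -- two elements of C in distinct gaps: derive a crossing with the block of 1
  exfalso
  -- order the two indices
  have key : ∀ u v iu iv, u ∈ C → v ∈ C → iu < iv → iv < p →
      decompA p n hp X iu < u → u < decompA p n hp X (iu + 1) →
      decompA p n hp X iv < v → v < decompA p n hp X (iv + 1) → False := by
    intro u v iu iv hu hv hiuv hivp hu1 hu2 hv1 hv2
    have h1u : 1 < u := by
      have h0 : decompA p n hp X 0 = 1 := decompA_zero p n hp X
      rcases Nat.eq_zero_or_pos iu with h | h
      · rw [h, h0] at hu1; omega
      · have := decompA_mono p n hp X 0 iu h (by omega)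
        omega
    have hmid : u < decompA p n hp X (iu + 1) ∧ decompA p n hp X (iu + 1) ≤ decompA p n hp X iv := by
      refine ⟨hu2, ?_⟩
      rcases Nat.lt_or_ge (iu + 1) iv with h' | h'
      · exact (decompA_mono p n hp X _ _ h' (by omega)).le
      · exact le_of_eq (congrArg _ (by omega))
    have hAmem : decompA p n hp X (iu + 1) ∈ decompB p n hp X :=
      decompA_mem p n hp X (by omega)
    have := X.2.1 1 u (decompA p n hp X (iu + 1)) v h1u (by omega) (by omega)
      (decompB p n hp X) (decompB_mem p n hp X) C hC
      (one_mem_decompB p n hp X) hAmem hu hv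
    exact hCB this.symm
  rcases lt_trichotomy j i with h | h | h
  · exact key y x₀ j i hy hx₀ h hi hyj.1 hyj.2 hx₀i.1 hx₀i.2
  · exact hij h
  · exact key x₀ y i j hx₀ hy h hj hx₀i.1 hx₀i.2 hyj.1 hyj.2

def segParts (i : ℕ) : Finset (Finset ℕ) :=
  X.1.parts.filter (· ⊆ segR p n hp X i)

lemma decompB_not_mem_segParts {i : ℕ} (hi : i < p) :
    decompB p n hp X ∉ segParts p n hp X i := by
  rw [segParts, Finset.mem_filter]
  rintro ⟨-, hsub⟩
  exact segR_not_mem_B p n hp X hi (hsub (one_mem_decompB p n hp X)) (one_mem_decompB p n hp X)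

lemma segParts_sup {i : ℕ} (hi : i < p) :
    (segParts p n hp X i).sup id = segR p n hp X i := by
  apply le_antisymm
  · apply Finset.sup_le
    intro C hC
    rw [segParts, Finset.mem_filter] at hC
    exact hC.2
  · intro x hx
    have hxS := segR_subset_S p n hp X hi hx
    have hxB := segR_not_mem_B p n hp X hi hx
    obtain ⟨C, hC, hxC⟩ := X.1.exists_mem hxS
    have hCB : C ≠ decompB p n hp X := by
      rintro rfl
      exact hxB hxC
    obtain ⟨j, hj, hsub⟩ := block_subset_segR p n hp X hC hCB
    have hji : j = i := by
      have hxj := hsub hxC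
      rw [mem_segR p n hp X hj] at hxj
      rw [mem_segR p n hp X hi] at hx
      exact seg_unique (decompA_mono p n hp X) hj hi hxj.1 hxj.2 hx.1 hx.2
    subst hji
    rw [Finset.mem_sup]
    exact ⟨C, by rw [segParts, Finset.mem_filter]; exact ⟨hC, hsub⟩, hxC⟩

/-- The number of blocks inside the `i`-th gap. -/
def kdec (i : ℕ) : ℕ := (segParts p n hp X i).card

/-- The restriction of the partition to the `i`-th gap. -/
def segFP {i : ℕ} (hi : i < p) : Finpartition (segR p n hp X i) :=
  X.1.ofSubset (Finset.filter_subset _ _) (segParts_sup p n hp X hi)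

lemma segR_card {i : ℕ} (hi : i < p) :
    (segR p n hp X i).card = p * kdec p n hp X i := by
  have h1 := (segFP p n hp X hi).sum_card_parts
  have h2 : ∀ C ∈ segParts p n hp X i, C.card = p := by
    intro C hC
    rw [segParts, Finset.mem_filter] at hC
    exact X.2.2 C hC.1
  rw [show (segFP p n hp X hi).parts = segParts p n hp X i from rfl] at h1
  rw [Finset.sum_congr rfl h2, Finset.sum_const, smul_eq_mul] at h1
  rw [kdec, ← h1, Nat.mul_comm]

lemma decompA_succ_eq {i : ℕ} (hi : i < p) :
    decompA p n hp X (i + 1) = decompA p n hp X i + 1 + p * kdec p n hp X i := by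
  have h1 := segR_card p n hp X hi
  rw [segR, Nat.card_Icc] at h1
  have h2 := decompA_mono p n hp X i (i + 1) (by omega) (by omega)
  omega

lemma decompA_closed : ∀ i, i ≤ p →
    decompA p n hp X i = 1 + i + p * ∑ j ∈ Finset.range i, kdec p n hp X j := by
  intro i
  induction i with
  | zero => intro _; simpa using decompA_zero p n hp X
  | succ i ih =>
    intro h
    rw [decompA_succ_eq p n hp X (by omega), ih (by omega), Finset.sum_range_succ]
    ring

lemma sum_kdec : ∑ j ∈ Finset.range p, kdec p n hp X j = n := by
  have h1 := decompA_closed p n hp X p (le_refl p)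
  rw [decompA_p p n hp X] at h1
  have h2 : p * (n + 1) = p * n + p := by ring
  have : p * ∑ j ∈ Finset.range p, kdec p n hp X j = p * n := by omega
  exact Nat.eq_of_mul_eq_mul_left hp this

end Decomp2
section Decomp3

variable (p n : ℕ) (hp : 0 < p) (X : NCP p (Finset.Icc 1 (p * (n + 1))))

lemma segR_eq_Icc {i : ℕ} (hi : i < p) :
    segR p n hp X i =
      Finset.Icc (decompA p n hp X i + 1) (decompA p n hp X i + p * kdec p n hp X i) := by
  rw [segR, decompA_succ_eq p n hp X hi]
  congr 1
  omega

lemma segFP_nc {i : ℕ} (hi : i < p) (h : segR p n hp X i =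
      Finset.Icc (decompA p n hp X i + 1) (decompA p n hp X i + p * kdec p n hp X i)) :
    IsNoncrossing ((segFP p n hp X hi).copy h) := by
  intro a b c d hab hbc hcd B₁ hB₁ B₂ hB₂ ha hc hb hd
  have h₁ : B₁ ∈ X.1.parts := by
    have := hB₁
    rw [Finpartition.copy_parts] at this
    exact (Finset.mem_filter.mp this).1
  have h₂ : B₂ ∈ X.1.parts := by
    have := hB₂
    rw [Finpartition.copy_parts] at this
    exact (Finset.mem_filter.mp this).1
  exact X.2.1 a b c d hab hbc hcd B₁ h₁ B₂ h₂ ha hc hb hd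

/-- The noncrossing partition of the `i`-th gap, shifted down to `Icc 1 (p * kdec i)`. -/
def Qdec (i : Fin p) : NCP p (Finset.Icc 1 (p * kdec p n hp X i.val)) :=
  (shiftNCP p (decompA p n hp X i.val) (p * kdec p n hp X i.val)).symm
    ⟨(segFP p n hp X i.2).copy (segR_eq_Icc p n hp X i.2),
      segFP_nc p n hp X i.2 _,
      by
        intro B hB
        rw [Finpartition.copy_parts] at hB
        exact X.2.2 B (Finset.mem_filter.mp hB).1⟩

lemma Qdec_parts (i : Fin p) :
    (Qdec p n hp X i).1.parts =
      (segParts p n hp X i.val).image (Finset.image (· - decompA p n hp X i.val)) := by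
  rw [Qdec, shiftNCP_symm_parts]
  rfl

/-- Decomposition of a noncrossing `p`-partition into the partitions of the gaps. -/
def decompose : {f : Fin p → Σ m : ℕ, NCP p (Finset.Icc 1 (p * m)) // ∑ i, (f i).1 = n} :=
  ⟨fun i => ⟨kdec p n hp X i.val, Qdec p n hp X i⟩, by
    exact Eq.trans (Finset.sum_congr rfl fun i _ => rfl)
      (Eq.trans (Fin.sum_univ_eq_sum_range (fun j => kdec p n hp X j) p)
        (sum_kdec p n hp X))⟩

end Decomp3

section Glue

variable (p n : ℕ) (hp : 0 < p) (f : Fin p → Σ m : ℕ, NCP p (Finset.Icc 1 (p * m)))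

def gK : ℕ → ℕ := fun j => if h : j < p then (f ⟨j, h⟩).1 else 0

def gA : ℕ → ℕ := fun i => 1 + i + p * ∑ j ∈ Finset.range i, gK p f j

lemma gK_fin (i : Fin p) : gK p f i.val = (f i).1 := by
  rw [gK, dif_pos i.2]

lemma gA_zero : gA p f 0 = 1 := by simp [gA]

lemma gA_succ (i : ℕ) : gA p f (i + 1) = gA p f i + 1 + p * gK p f i := by
  simp only [gA, Finset.sum_range_succ]
  ring

lemma gA_mono : ∀ i j, i < j → gA p f i < gA p f j := by
  intro i j hij
  have h1 : ∑ k ∈ Finset.range i, gK p f k ≤ ∑ k ∈ Finset.range j, gK p f k :=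
    Finset.sum_le_sum_of_subset (Finset.range_subset_range.mpr (by omega))
  have h2 : p * ∑ k ∈ Finset.range i, gK p f k ≤ p * ∑ k ∈ Finset.range j, gK p f k :=
    Nat.mul_le_mul_left p h1
  simp only [gA]
  omega

lemma gA_strictMono : StrictMono (gA p f) := fun _ _ h => gA_mono p f _ _ h

lemma gA_pos (i : ℕ) : 1 ≤ gA p f i := by
  simp only [gA]; omega

lemma gA_p (hf : ∑ i, (f i).1 = n) : gA p f p = p * (n + 1) + 1 := by
  have h1 : ∑ j ∈ Finset.range p, gK p f j = n := by
    rw [← Fin.sum_univ_eq_sum_range (fun j => gK p f j) p]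
    rw [Finset.sum_congr rfl (fun i _ => gK_fin p f i)]
    exact hf
  simp only [gA]
  rw [h1]
  ring

def gS (i : Fin p) : NCP p (Finset.Icc (gA p f i.val + 1) (gA p f i.val + p * (f i).1)) :=
  shiftNCP p (gA p f i.val) (p * (f i).1) (f i).2

def gB : Finset ℕ := (Finset.range p).image (gA p f)

def glueParts : Finset (Finset ℕ) :=
  insert (gB p f) (Finset.univ.biUnion fun i : Fin p => (gS p f i).1.parts)

lemma gS_mem_bounds {i : Fin p} {C : Finset ℕ} (hC : C ∈ (gS p f i).1.parts) :
    ∀ x ∈ C, gA p f i.val < x ∧ x < gA p f (i.val + 1) := by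
  intro x hx
  have h1 := (gS p f i).1.le hC hx
  rw [Finset.mem_Icc] at h1
  have h2 := gA_succ p f i.val
  have h3 : gK p f i.val = (f i).1 := gK_fin p f i
  rw [h3] at h2
  omega

lemma gB_disjoint_block {i : Fin p} {C : Finset ℕ} (hC : C ∈ (gS p f i).1.parts) :
    Disjoint (gB p f) C := by
  rw [Finset.disjoint_left]
  intro x hx hxC
  rw [gB, Finset.mem_image] at hx
  obtain ⟨j, hj, rfl⟩ := hx
  rw [Finset.mem_range] at hj
  have h1 := gS_mem_bounds p f hC _ hxC
  rcases Nat.lt_or_ge j (i.val + 1) with h | h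
  · rcases Nat.lt_or_ge j i.val with h' | h'
    · have := gA_mono p f j i.val h'
      omega
    · have : j = i.val := by omega
      subst this
      omega
  · have : gA p f (i.val + 1) ≤ gA p f j := by
      rcases Nat.lt_or_ge (i.val + 1) j with h' | h'
      · exact (gA_mono p f _ _ h').le
      · exact le_of_eq (congrArg _ (by omega))
    omega

lemma gS_blocks_disjoint {i j : Fin p} (hij : i ≠ j) {C D : Finset ℕ}
    (hC : C ∈ (gS p f i).1.parts) (hD : D ∈ (gS p f j).1.parts) : Disjoint C D := by
  rw [Finset.disjoint_left]
  intro x hxC hxD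
  have h1 := gS_mem_bounds p f hC _ hxC
  have h2 := gS_mem_bounds p f hD _ hxD
  have : i.val = j.val :=
    seg_unique (p := p) (fun a b hab _ => gA_mono p f a b hab) i.2 j.2 h1.1 h1.2 h2.1 h2.2
  exact hij (Fin.ext this)

def glueFP (hf : ∑ i, (f i).1 = n) : Finpartition (Finset.Icc 1 (p * (n + 1))) where
  parts := glueParts p f
  supIndep := by
    rw [Finset.supIndep_iff_pairwiseDisjoint]
    intro a ha b hb hab
    rw [Finset.mem_coe, glueParts, Finset.mem_insert] at ha hb
    simp only [Finset.mem_biUnion, Finset.mem_univ, true_and] at ha hb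
    rcases ha with rfl | ⟨i, hi⟩
    · rcases hb with rfl | ⟨j, hj⟩
      · exact absurd rfl hab
      · exact gB_disjoint_block p f hj
    · rcases hb with rfl | ⟨j, hj⟩
      · exact (gB_disjoint_block p f hi).symm
      · rcases eq_or_ne i j with rfl | hij
        · exact (gS p f i).1.disjoint hi hj hab
        · exact gS_blocks_disjoint p f hij hi hj
  sup_parts := by
    apply le_antisymm
    · apply Finset.sup_le
      intro C hC
      rw [glueParts, Finset.mem_insert] at hC
      simp only [Finset.mem_biUnion, Finset.mem_univ, true_and] at hC
      rcases hC with rfl | ⟨i, hi⟩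
      · intro x hx
        simp only [id_eq, gB, Finset.mem_image] at hx
        obtain ⟨j, hj, rfl⟩ := hx
        rw [Finset.mem_range] at hj
        have h1 := gA_pos p f j
        have h2 : gA p f j < gA p f p := gA_mono p f j p hj
        rw [gA_p p n f hf] at h2
        rw [Finset.mem_Icc]
        omega
      · intro x hx
        have h1 := gS_mem_bounds p f hi _ hx
        have h2 : gA p f (i.val + 1) ≤ gA p f p := by
          rcases Nat.lt_or_ge (i.val + 1) p with h' | h'
          · exact (gA_mono p f _ _ h').le
          · exact le_of_eq (congrArg _ (by omega))
        rw [gA_p p n f hf] at h2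
        have h3 := gA_pos p f i.val
        rw [Finset.mem_Icc]
        omega
    · intro x hx
      rw [Finset.mem_Icc] at hx
      rw [Finset.mem_sup]
      by_cases hxB : x ∈ gB p f
      · exact ⟨gB p f, Finset.mem_insert_self _ _, hxB⟩
      · have hcov : ∃ i, i < p ∧ gA p f i < x ∧ x < gA p f (i + 1) := by
          refine seg_cover (gA_zero p f) (gA_p p n f hf)
            (fun a b hab _ => gA_mono p f a b hab) hp hx.1 hx.2 ?_
          intro j hj hjx
          exact hxB (by rw [gB, Finset.mem_image]; exact ⟨j, Finset.mem_range.mpr hj, hjx⟩)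
        obtain ⟨i, hi, hx1, hx2⟩ := hcov
        have hxU : x ∈ Finset.Icc (gA p f i + 1) (gA p f i + p * (f ⟨i, hi⟩).1) := by
          have h2 := gA_succ p f i
          have h3 : gK p f i = (f ⟨i, hi⟩).1 := gK_fin p f ⟨i, hi⟩
          rw [h3] at h2
          rw [Finset.mem_Icc]
          omega
        obtain ⟨C, hC, hxC⟩ := (gS p f ⟨i, hi⟩).1.exists_mem hxU
        refine ⟨C, ?_, hxC⟩
        rw [glueParts, Finset.mem_insert]
        right
        simp only [Finset.mem_biUnion, Finset.mem_univ, true_and]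
        exact ⟨⟨i, hi⟩, hC⟩
  bot_notMem := by
    rw [glueParts, Finset.mem_insert]
    rintro (h | h)
    · have : gA p f 0 ∈ gB p f := by
        rw [gB, Finset.mem_image]
        exact ⟨0, Finset.mem_range.mpr hp, rfl⟩
      rw [← h] at this
      exact absurd this (Finset.notMem_empty _)
    · simp only [Finset.mem_biUnion, Finset.mem_univ, true_and] at h
      obtain ⟨i, hi⟩ := h
      exact (gS p f i).1.bot_notMem hi

lemma glueFP_parts (hf : ∑ i, (f i).1 = n) : (glueFP p n hp f hf).parts = glueParts p f := rfl

def glueNCP (hf : ∑ i, (f i).1 = n) : NCP p (Finset.Icc 1 (p * (n + 1))) := by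
  refine ⟨glueFP p n hp f hf, ?_, ?_⟩
  · intro a b c d hab hbc hcd B₁ hB₁ B₂ hB₂ ha hc hb hd
    rw [glueFP_parts, glueParts, Finset.mem_insert] at hB₁ hB₂
    simp only [Finset.mem_biUnion, Finset.mem_univ, true_and] at hB₁ hB₂
    rcases hB₁ with rfl | ⟨i, hi⟩
    · rcases hB₂ with rfl | ⟨j, hj⟩
      · rfl
      · -- c ∈ gB strictly between b, d ∈ block of segment j : impossible
        exfalso
        have hb' := gS_mem_bounds p f hj _ hb
        have hd' := gS_mem_bounds p f hj _ hd
        rw [gB, Finset.mem_image] at hc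
        obtain ⟨l, hl, rfl⟩ := hc
        rw [Finset.mem_range] at hl
        rcases Nat.lt_or_ge l (j.val + 1) with h | h
        · rcases Nat.lt_or_ge l j.val with h' | h'
          · have := gA_mono p f l j.val h'
            omega
          · have : l = j.val := by omega
            subst this
            omega
        · have : gA p f (j.val + 1) ≤ gA p f l := by
            rcases Nat.lt_or_ge (j.val + 1) l with h' | h'
            · exact (gA_mono p f _ _ h').le
            · exact le_of_eq (congrArg _ (by omega))
          omega
    · rcases hB₂ with rfl | ⟨j, hj⟩
      · exfalso
        have ha' := gS_mem_bounds p f hi _ ha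
        have hc' := gS_mem_bounds p f hi _ hc
        rw [gB, Finset.mem_image] at hb
        obtain ⟨l, hl, rfl⟩ := hb
        rw [Finset.mem_range] at hl
        rcases Nat.lt_or_ge l (i.val + 1) with h | h
        · rcases Nat.lt_or_ge l i.val with h' | h'
          · have := gA_mono p f l i.val h'
            omega
          · have : l = i.val := by omega
            subst this
            omega
        · have : gA p f (i.val + 1) ≤ gA p f l := by
            rcases Nat.lt_or_ge (i.val + 1) l with h' | h'
            · exact (gA_mono p f _ _ h').le
            · exact le_of_eq (congrArg _ (by omega))
          omega
      · rcases eq_or_ne i j with rfl | hij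
        · exact (gS p f i).2.1 a b c d hab hbc hcd B₁ hi B₂ hj ha hc hb hd
        · exfalso
          have ha' := gS_mem_bounds p f hi _ ha
          have hc' := gS_mem_bounds p f hi _ hc
          have hb' := gS_mem_bounds p f hj _ hb
          have hd' := gS_mem_bounds p f hj _ hd
          rcases Nat.lt_or_ge i.val j.val with h | h
          · have : gA p f (i.val + 1) ≤ gA p f j.val := by
              rcases Nat.lt_or_ge (i.val + 1) j.val with h' | h'
              · exact (gA_mono p f _ _ h').le
              · exact le_of_eq (congrArg _ (by omega))
            omega
          · have : i.val ≠ j.val := fun hh => hij (Fin.ext hh)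
            have hji : j.val < i.val := by omega
            have : gA p f (j.val + 1) ≤ gA p f i.val := by
              rcases Nat.lt_or_ge (j.val + 1) i.val with h' | h'
              · exact (gA_mono p f _ _ h').le
              · exact le_of_eq (congrArg _ (by omega))
            omega
  · intro B hB
    rw [glueFP_parts, glueParts, Finset.mem_insert] at hB
    simp only [Finset.mem_biUnion, Finset.mem_univ, true_and] at hB
    rcases hB with rfl | ⟨i, hi⟩
    · rw [gB, Finset.card_image_of_injective _ (gA_strictMono p f).injective,
        Finset.card_range]
    · exact (gS p f i).2.2 B hi

end Glue
section Helpers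

lemma image_add_injective (c : ℕ) : Function.Injective (Finset.image (· + c)) := by
  intro A B h
  ext x
  constructor
  · intro hx
    have : x + c ∈ B.image (· + c) := by
      rw [← h]; exact Finset.mem_image_of_mem _ hx
    rw [Finset.mem_image] at this
    obtain ⟨y, hy, hyx⟩ := this
    have : y = x := by omega
    exact this ▸ hy
  · intro hx
    have : x + c ∈ A.image (· + c) := by
      rw [h]; exact Finset.mem_image_of_mem _ hx
    rw [Finset.mem_image] at this
    obtain ⟨y, hy, hyx⟩ := this
    have : y = x := by omega
    exact this ▸ hy

lemma ncp_parts_card {p m : ℕ} (hp : 0 < p) (Q : NCP p (Finset.Icc 1 (p * m))) :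
    Q.1.parts.card = m := by
  have h1 := Q.1.sum_card_parts
  have h2 : ∀ C ∈ Q.1.parts, C.card = p := Q.2.2
  rw [Finset.sum_congr rfl h2, Finset.sum_const, smul_eq_mul, Nat.card_Icc] at h1
  have h3 : Q.1.parts.card * p = p * m := by omega
  rw [Nat.mul_comm] at h3
  exact Nat.eq_of_mul_eq_mul_left hp h3

lemma ncp_sigma_ext {p m m' : ℕ} (h : m = m') {Q : NCP p (Finset.Icc 1 (p * m))}
    {Q' : NCP p (Finset.Icc 1 (p * m'))} (hQ : Q.1.parts = Q'.1.parts) :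
    (⟨m, Q⟩ : Σ m : ℕ, NCP p (Finset.Icc 1 (p * m))) = ⟨m', Q'⟩ := by
  subst h
  exact congrArg _ (Subtype.ext (Finpartition.ext hQ))

end Helpers

section RightInv

variable (p n : ℕ) (hp : 0 < p) (f : Fin p → Σ m : ℕ, NCP p (Finset.Icc 1 (p * m)))
  (hf : ∑ i, (f i).1 = n)

lemma decompB_glue : decompB p n hp (glueNCP p n hp f hf) = gB p f := by
  apply (glueNCP p n hp f hf).1.part_eq_of_mem
  · rw [show ((glueNCP p n hp f hf).1).parts = glueParts p f from rfl, glueParts]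
    exact Finset.mem_insert_self _ _
  · rw [gB, Finset.mem_image]
    exact ⟨0, Finset.mem_range.mpr hp, gA_zero p f⟩

lemma decompA_glue : ∀ j, j ≤ p → decompA p n hp (glueNCP p n hp f hf) j = gA p f j := by
  have huniq : (fun j : Fin p => gA p f j.val) =
      ⇑((decompB p n hp (glueNCP p n hp f hf)).orderEmbOfFin
        (decompB_card p n hp (glueNCP p n hp f hf))) := by
    apply Finset.orderEmbOfFin_unique
    · intro x
      rw [decompB_glue p n hp f hf, gB, Finset.mem_image]
      exact ⟨x.val, Finset.mem_range.mpr x.2, rfl⟩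
    · intro a b hab
      exact gA_mono p f a.val b.val hab
  intro j hj
  rcases Nat.lt_or_ge j p with h | h
  · simp only [decompA]
    rw [dif_pos h]
    exact (congrFun huniq ⟨j, h⟩).symm
  · have hjp : j = p := by omega
    rw [hjp, decompA_p, gA_p p n f hf]

lemma segR_glue {i : ℕ} (hi : i < p) :
    segR p n hp (glueNCP p n hp f hf) i = Finset.Icc (gA p f i + 1) (gA p f (i + 1) - 1) := by
  rw [segR, decompA_glue p n hp f hf i (by omega), decompA_glue p n hp f hf (i + 1) (by omega)]

lemma segParts_glue (i : Fin p) :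
    segParts p n hp (glueNCP p n hp f hf) i.val = (gS p f i).1.parts := by
  ext C
  rw [segParts, Finset.mem_filter]
  constructor
  · rintro ⟨hC, hsub⟩
    rw [show ((glueNCP p n hp f hf).1).parts = glueParts p f from rfl, glueParts,
      Finset.mem_insert] at hC
    simp only [Finset.mem_biUnion, Finset.mem_univ, true_and] at hC
    rcases hC with rfl | ⟨j, hj⟩
    · exfalso
      have h1 : (1 : ℕ) ∈ gB p f := by
        rw [gB, Finset.mem_image]
        exact ⟨0, Finset.mem_range.mpr hp, gA_zero p f⟩
      have := hsub h1
      rw [segR_glue p n hp f hf i.2, Finset.mem_Icc] at this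
      have := gA_pos p f i.val
      omega
    · have hCne : C.Nonempty := (glueNCP p n hp f hf).1.nonempty_of_mem_parts (by
        rw [show ((glueNCP p n hp f hf).1).parts = glueParts p f from rfl, glueParts]
        refine Finset.mem_insert_of_mem ?_
        simp only [Finset.mem_biUnion, Finset.mem_univ, true_and]
        exact ⟨j, hj⟩)
      obtain ⟨x, hx⟩ := hCne
      have h1 := gS_mem_bounds p f hj _ hx
      have h2 := hsub hx
      rw [segR_glue p n hp f hf i.2, Finset.mem_Icc] at h2
      have h3 : gA p f (i.val + 1) ≥ 1 := gA_pos p f _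
      have hji : j.val = i.val :=
        seg_unique (p := p) (fun a b hab _ => gA_mono p f a b hab) j.2 i.2
          h1.1 h1.2 (by omega) (by omega)
      rwa [← Fin.ext hji]
  · intro hC
    constructor
    · rw [show ((glueNCP p n hp f hf).1).parts = glueParts p f from rfl, glueParts]
      refine Finset.mem_insert_of_mem ?_
      simp only [Finset.mem_biUnion, Finset.mem_univ, true_and]
      exact ⟨i, hC⟩
    · intro x hx
      have h1 := gS_mem_bounds p f hC _ hx
      rw [segR_glue p n hp f hf i.2, Finset.mem_Icc]
      omega

lemma kdec_glue (i : Fin p) : kdec p n hp (glueNCP p n hp f hf) i.val = (f i).1 := by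
  rw [kdec, segParts_glue p n hp f hf i,
    show ((gS p f i).1).parts = ((f i).2.1).parts.image (Finset.image (· + gA p f i.val)) from rfl,
    Finset.card_image_of_injective _ (image_add_injective _)]
  exact ncp_parts_card hp (f i).2

lemma Qdec_glue_parts (i : Fin p) :
    (Qdec p n hp (glueNCP p n hp f hf) i).1.parts = ((f i).2).1.parts := by
  rw [Qdec_parts, segParts_glue p n hp f hf i,
    show ((gS p f i).1).parts = ((f i).2.1).parts.image (Finset.image (· + gA p f i.val)) from rfl,
    decompA_glue p n hp f hf i.val (le_of_lt i.2), Finset.image_image]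
  have h1 : ∀ A ∈ ((f i).2.1).parts,
      (Finset.image (· - gA p f i.val) ∘ Finset.image (· + gA p f i.val)) A = A := by
    intro A hA
    simp only [Function.comp_apply]
    rw [Finset.image_image]
    have : Set.EqOn ((· - gA p f i.val) ∘ (· + gA p f i.val)) id A := by
      intro x _
      simp only [Function.comp_apply, id_eq]
      omega
    rw [Finset.image_congr this, Finset.image_id]
  rw [Finset.image_congr (fun A hA => h1 A hA)]
  exact Finset.image_id'

lemma decompose_glue :
    decompose p n hp (glueNCP p n hp f hf) = ⟨f, hf⟩ := by
  apply Subtype.ext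
  funext i
  exact ncp_sigma_ext (kdec_glue p n hp f hf i) (Qdec_glue_parts p n hp f hf i)

end RightInv
section LeftInv

variable (p n : ℕ) (hp : 0 < p) (X : NCP p (Finset.Icc 1 (p * (n + 1))))

lemma gK_decompose {j : ℕ} (hj : j < p) :
    gK p (decompose p n hp X).1 j = kdec p n hp X j := by
  rw [gK, dif_pos hj]
  rfl

lemma gA_decompose : ∀ i, i ≤ p → gA p (decompose p n hp X).1 i = decompA p n hp X i := by
  intro i hi
  have hsum : ∑ j ∈ Finset.range i, gK p (decompose p n hp X).1 j
      = ∑ j ∈ Finset.range i, kdec p n hp X j :=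
    Finset.sum_congr rfl fun j hj =>
      gK_decompose p n hp X (lt_of_lt_of_le (Finset.mem_range.mp hj) hi)
  simp only [gA]
  rw [hsum, decompA_closed p n hp X i hi]

lemma gB_decompose : gB p (decompose p n hp X).1 = decompB p n hp X := by
  apply Finset.eq_of_subset_of_card_le
  · intro x hx
    rw [gB, Finset.mem_image] at hx
    obtain ⟨j, hj, rfl⟩ := hx
    rw [Finset.mem_range] at hj
    rw [gA_decompose p n hp X j (le_of_lt hj)]
    exact decompA_mem p n hp X hj
  · rw [decompB_card p n hp X, gB,
      Finset.card_image_of_injective _ (gA_strictMono _ _).injective, Finset.card_range]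

lemma gS_decompose (i : Fin p) :
    (gS p (decompose p n hp X).1 i).1.parts = segParts p n hp X i.val := by
  have e1 : gS p (decompose p n hp X).1 i
      = shiftNCP p (gA p (decompose p n hp X).1 i.val) (p * kdec p n hp X i.val)
          (Qdec p n hp X i) := rfl
  rw [e1, shiftNCP_parts, Qdec_parts, gA_decompose p n hp X i.val (le_of_lt i.2),
    Finset.image_image]
  have h1 : ∀ C ∈ segParts p n hp X i.val,
      (Finset.image (· + decompA p n hp X i.val) ∘
        Finset.image (· - decompA p n hp X i.val)) C = C := by
    intro C hC
    simp only [Function.comp_apply]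
    rw [Finset.image_image]
    have hsub : C ⊆ segR p n hp X i.val := (Finset.mem_filter.mp hC).2
    have : Set.EqOn ((· + decompA p n hp X i.val) ∘ (· - decompA p n hp X i.val)) id C := by
      intro x hx
      have := hsub hx
      rw [segR, Finset.mem_Icc] at this
      simp only [Function.comp_apply, id_eq]
      omega
    rw [Finset.image_congr this, Finset.image_id]
  rw [Finset.image_congr (fun C hC => h1 C hC)]
  exact Finset.image_id'

lemma glueParts_decompose : glueParts p (decompose p n hp X).1 = X.1.parts := by
  rw [glueParts, gB_decompose]
  ext C
  rw [Finset.mem_insert]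
  simp only [Finset.mem_biUnion, Finset.mem_univ, true_and]
  constructor
  · rintro (rfl | ⟨i, hi⟩)
    · exact decompB_mem p n hp X
    · rw [gS_decompose p n hp X i] at hi
      exact (Finset.mem_filter.mp hi).1
  · intro hC
    by_cases h : C = decompB p n hp X
    · left; exact h
    · right
      obtain ⟨i, hi, hsub⟩ := block_subset_segR p n hp X hC h
      refine ⟨⟨i, hi⟩, ?_⟩
      rw [gS_decompose p n hp X ⟨i, hi⟩]
      rw [segParts, Finset.mem_filter]
      exact ⟨hC, hsub⟩

lemma glue_decompose :
    glueNCP p n hp (decompose p n hp X).1 (decompose p n hp X).2 = X :=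
  Subtype.ext (Finpartition.ext (glueParts_decompose p n hp X))

end LeftInv

/-- The decomposition equivalence for noncrossing `p`-partitions. -/
def partDec (p n : ℕ) (hp : 0 < p) : NCP p (Finset.Icc 1 (p * (n + 1))) ≃
    {f : Fin p → Σ m : ℕ, NCP p (Finset.Icc 1 (p * m)) // ∑ i, (f i).1 = n} where
  toFun := decompose p n hp
  invFun := fun F => glueNCP p n hp F.1 F.2
  left_inv := fun X => glue_decompose p n hp X
  right_inv := fun F => by
    obtain ⟨f, hf⟩ := F
    exact decompose_glue p n hp f hf

section Assembly

instance uniqueNCP0 (p : ℕ) : Unique (NCP p (Finset.Icc 1 (p * 0))) where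
  default := ⟨⟨∅, Finset.supIndep_empty _, by
      rw [Finset.sup_empty]
      symm
      rw [Finset.bot_eq_empty]
      apply Finset.Icc_eq_empty
      omega, Finset.notMem_empty _⟩,
    fun _ _ _ _ _ _ _ _ hB₁ => absurd hB₁ (Finset.notMem_empty _),
    fun _ hB => absurd hB (Finset.notMem_empty _)⟩
  uniq := fun P => by
    apply Subtype.ext
    apply Finpartition.ext
    show P.1.parts = ∅
    rw [Finset.eq_empty_iff_forall_notMem]
    intro C hC
    obtain ⟨x, hx⟩ := P.1.nonempty_of_mem_parts hC
    have := P.1.le hC hx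
    rw [show Finset.Icc 1 (p * 0) = ∅ from Finset.Icc_eq_empty (by omega)] at this
    exact Finset.notMem_empty _ this

/-- Transfer the sigma-subtype along a family of equivalences. -/
def sigmaTransfer (p n : ℕ) (e : ∀ m, m ≤ n → (NCP p (Finset.Icc 1 (p * m)) ≃ TT p m)) :
    {f : Fin p → Σ m : ℕ, NCP p (Finset.Icc 1 (p * m)) // ∑ i, (f i).1 = n} ≃
      {g : Fin p → Σ m : ℕ, TT p m // ∑ i, (g i).1 = n} where
  toFun := fun F =>
    ⟨fun i => ⟨(F.1 i).1, e (F.1 i).1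
        (le_trans (Finset.single_le_sum (f := fun j => (F.1 j).1) (fun j _ => Nat.zero_le _) (Finset.mem_univ i))
          (le_of_eq F.2))
      ((F.1 i).2)⟩, Eq.trans (Finset.sum_congr rfl fun i _ => rfl) F.2⟩
  invFun := fun G =>
    ⟨fun i => ⟨(G.1 i).1, (e (G.1 i).1
        (le_trans (Finset.single_le_sum (f := fun j => (G.1 j).1) (fun j _ => Nat.zero_le _) (Finset.mem_univ i))
          (le_of_eq G.2))).symm
      ((G.1 i).2)⟩, Eq.trans (Finset.sum_congr rfl fun i _ => rfl) G.2⟩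
  left_inv := fun F => by
    apply Subtype.ext
    funext i
    refine Sigma.ext rfl (heq_of_eq ?_)
    show (e (F.1 i).1 _).symm ((e (F.1 i).1 _) ((F.1 i).2)) = (F.1 i).2
    exact Equiv.symm_apply_apply _ _
  right_inv := fun G => by
    apply Subtype.ext
    funext i
    refine Sigma.ext rfl (heq_of_eq ?_)
    show (e (G.1 i).1 _) ((e (G.1 i).1 _).symm ((G.1 i).2)) = (G.1 i).2
    exact Equiv.apply_symm_apply _ _

lemma main_equiv (p : ℕ) (hp : 0 < p) :
    ∀ n, Nonempty (NCP p (Finset.Icc 1 (p * n)) ≃ TT p n) := by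
  intro n
  induction n using Nat.strong_induction_on with
  | _ n ih =>
    cases n with
    | zero => exact ⟨Equiv.ofUnique _ _⟩
    | succ m =>
      have e : ∀ k, k ≤ m → (NCP p (Finset.Icc 1 (p * k)) ≃ TT p k) :=
        fun k hk => Classical.choice (ih k (by omega))
      exact ⟨(partDec p m hp).trans ((sigmaTransfer p m e).trans (treeDec p m).symm)⟩

end Assembly


/-- For every integer `p ≥ 2` and every natural number `n`, there is a bijection between
noncrossing partitions of `{1,…,pn}` all of whose blocks have exactly `p` elements, and
full `p`-ary plane trees with `n` internal nodes. -/
theorem bijection_p_partitions_p_ary_trees (p : ℕ) (hp : 2 ≤ p) (n : ℕ) :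
    Nonempty
      ({P : Finpartition (Finset.Icc 1 (p * n)) //
          IsNoncrossing P ∧ ∀ B ∈ P.parts, B.card = p} ≃
        {t : PTree p // t.internalNodes = n}) := by
  exact main_equiv p (by omega) n
end

section
/- For every natural number n, the number of noncrossing partitions of {1,…,n} equals the Catalan number C_n = (1/(2n+1))·C(2n+1, n). -/
open Finset

namespace NCAux

variable {s : Finset ℕ}

/-- Build a finpartition from pairwise-disjoint data. -/
def mk' (s : Finset ℕ) (parts : Finset (Finset ℕ))
    (hdisj : (parts : Set (Finset ℕ)).PairwiseDisjoint id)
    (hsup : parts.sup id = s) (hbot : ∅ ∉ parts) : Finpartition s :=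
  ⟨parts, Finset.supIndep_iff_pairwiseDisjoint.2 hdisj, hsup, hbot⟩

@[simp] lemma parts_mk' {s parts hdisj hsup hbot} :
    (mk' s parts hdisj hsup hbot).parts = parts := rfl

lemma part_ne_empty_mem (P : Finpartition s) {a : ℕ} (h : P.part a ≠ ∅) :
    P.part a ∈ P.parts ∧ a ∈ P.part a := by
  by_cases ha : a ∈ s
  · exact ⟨P.part_mem.2 ha, P.mem_part ha⟩
  · exact absurd (by simp [Finpartition.part, ha]) h

lemma part_copy {s t : Finset ℕ} (P : Finpartition s) (h : s = t) (a : ℕ) :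
    (P.copy h).part a = P.part a := by subst h; rfl

lemma isNoncrossing_copy {s t : Finset ℕ} {P : Finpartition s} (h : s = t)
    (hP : IsNoncrossing P) : IsNoncrossing (P.copy h) := by
  subst h; exact hP

/-! ### Restriction -/

/-- Restrict a finpartition to a subset which is a union of parts. -/
def restrict (P : Finpartition s) (t : Finset ℕ) (hts : t ⊆ s)
    (h : ∀ B ∈ P.parts, B ⊆ t ∨ Disjoint B t) : Finpartition t :=
  mk' t (P.parts.filter (· ⊆ t))
    (P.disjoint.subset (by intro x hx; simp only [Set.mem_setOf_eq, coe_filter] at hx; exact hx.1))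
    (by
      apply le_antisymm
      · simp only [Finset.sup_le_iff, mem_filter]
        exact fun B hB => hB.2
      · intro x hx
        obtain ⟨B, hB, hxB⟩ := P.exists_mem (hts hx)
        rcases h B hB with hBt | hBt
        · simp only [mem_sup, mem_filter, id]
          exact ⟨B, ⟨hB, hBt⟩, hxB⟩
        · exact absurd hx (Finset.disjoint_left.1 hBt hxB).elim)
    (fun hc => P.bot_notMem (mem_filter.1 hc).1)

lemma mem_restrict {P : Finpartition s} {t hts h} {B : Finset ℕ} :
    B ∈ (restrict P t hts h).parts ↔ B ∈ P.parts ∧ B ⊆ t := mem_filter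

lemma isNoncrossing_restrict {P : Finpartition s} {t hts h} (hP : IsNoncrossing P) :
    IsNoncrossing (restrict P t hts h) := by
  intro a b c d hab hbc hcd B₁ hB₁ B₂ hB₂ ha hc hb hd
  exact hP a b c d hab hbc hcd B₁ (mem_restrict.1 hB₁).1 B₂ (mem_restrict.1 hB₂).1 ha hc hb hd

/-! ### Erasing a point -/

/-- Remove the point `a` from a finpartition. -/
def erasePoint (P : Finpartition s) (a : ℕ) : Finpartition (s.erase a) :=
  mk' _ ((P.parts.image (·.erase a)).erase ∅)
    (by
      intro X hX Y hY hXY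
      simp only [coe_erase, Set.mem_diff, mem_coe, mem_image] at hX hY
      obtain ⟨⟨B, hB, rfl⟩, -⟩ := hX
      obtain ⟨⟨C, hC, rfl⟩, -⟩ := hY
      have hBC : B ≠ C := fun h => hXY (by rw [h])
      exact (P.disjoint hB hC hBC).mono (erase_subset _ _) (erase_subset _ _))
    (by
      ext x
      simp only [mem_sup, mem_erase, mem_image, id]
      constructor
      · rintro ⟨X, ⟨-, B, hB, rfl⟩, hx⟩
        rw [mem_erase] at hx
        exact ⟨hx.1, (P.le hB) hx.2⟩
      · rintro ⟨hxa, hxs⟩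
        obtain ⟨B, hB, hxB⟩ := P.exists_mem hxs
        refine ⟨B.erase a, ⟨?_, B, hB, rfl⟩, mem_erase.2 ⟨hxa, hxB⟩⟩
        intro h
        have : x ∈ (∅ : Finset ℕ) := h ▸ mem_erase.2 ⟨hxa, hxB⟩
        simp at this)
    (notMem_erase _ _)

lemma mem_erasePoint {P : Finpartition s} {a : ℕ} {X : Finset ℕ} :
    X ∈ (erasePoint P a).parts ↔ X ≠ ∅ ∧ ∃ B ∈ P.parts, B.erase a = X := by
  show X ∈ ((P.parts.image (·.erase a)).erase ∅) ↔ _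
  simp [mem_erase, mem_image, and_comm]

lemma isNoncrossing_erasePoint {P : Finpartition s} {x : ℕ} (hP : IsNoncrossing P) :
    IsNoncrossing (erasePoint P x) := by
  intro a b c d hab hbc hcd X hX Y hY ha hc hb hd
  obtain ⟨hXne, B, hB, rfl⟩ := mem_erasePoint.1 hX
  obtain ⟨hYne, C, hC, rfl⟩ := mem_erasePoint.1 hY
  have : B = C := hP a b c d hab hbc hcd B hB C hC
    (mem_of_mem_erase ha) (mem_of_mem_erase hc) (mem_of_mem_erase hb) (mem_of_mem_erase hd)
  rw [this]

end NCAux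

namespace NCAux

variable {s : Finset ℕ}

/-! ### Shifting -/

/-- Map a finpartition along a function injective on the ground set. -/
def mapFun (P : Finpartition s) (f : ℕ → ℕ)
    (hf : ∀ x ∈ s, ∀ y ∈ s, f x = f y → x = y) : Finpartition (s.image f) :=
  mk' _ (P.parts.image (·.image f))
    (by
      intro X hX Y hY hXY
      simp only [mem_coe, mem_image] at hX hY
      obtain ⟨B, hB, rfl⟩ := hX
      obtain ⟨C, hC, rfl⟩ := hY
      have hBC : B ≠ C := fun h => hXY (by rw [h])
      have hdBC := P.disjoint hB hC hBC
      simp only [Function.onFun, id] at hdBC ⊢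
      rw [Finset.disjoint_left] at hdBC ⊢
      rintro z hz hz'
      simp only [mem_image] at hz hz'
      obtain ⟨x, hx, rfl⟩ := hz
      obtain ⟨y, hy, hyx⟩ := hz'
      have : y = x := hf y (P.le hC hy) x (P.le hB hx) hyx
      exact hdBC hx (this ▸ hy))
    (by
      ext z
      simp only [mem_sup, mem_image, id]
      constructor
      · rintro ⟨X, ⟨B, hB, rfl⟩, hz⟩
        simp only [mem_image] at hz
        obtain ⟨x, hx, rfl⟩ := hz
        exact ⟨x, P.le hB hx, rfl⟩
      · rintro ⟨x, hx, rfl⟩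
        obtain ⟨B, hB, hxB⟩ := P.exists_mem hx
        exact ⟨B.image f, ⟨B, hB, rfl⟩, mem_image.2 ⟨x, hxB, rfl⟩⟩)
    (by
      simp only [mem_image, not_exists]
      rintro B ⟨hB, h⟩
      exact (P.nonempty_of_mem_parts hB |>.image f).ne_empty h)

lemma mem_mapFun {P : Finpartition s} {f hf} {X : Finset ℕ} :
    X ∈ (mapFun P f hf).parts ↔ ∃ B ∈ P.parts, B.image f = X := by
  show X ∈ P.parts.image (·.image f) ↔ _
  simp

lemma isNoncrossing_mapFun {P : Finpartition s} {f : ℕ → ℕ} {hf}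
    (hmono : ∀ x ∈ s, ∀ y ∈ s, x < y → f x < f y) (hP : IsNoncrossing P) :
    IsNoncrossing (mapFun P f hf) := by
  have key : ∀ x ∈ s, ∀ y ∈ s, f x < f y → x < y := by
    intro x hx y hy hlt
    rcases lt_trichotomy x y with h | h | h
    · exact h
    · subst h; omega
    · exact absurd (hmono y hy x hx h) (by omega)
  intro a b c d hab hbc hcd X hX Y hY ha hc hb hd
  obtain ⟨B, hB, rfl⟩ := mem_mapFun.1 hX
  obtain ⟨C, hC, rfl⟩ := mem_mapFun.1 hY
  obtain ⟨a', ha', rfl⟩ := mem_image.1 ha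
  obtain ⟨c', hc', rfl⟩ := mem_image.1 hc
  obtain ⟨b', hb', rfl⟩ := mem_image.1 hb
  obtain ⟨d', hd', rfl⟩ := mem_image.1 hd
  have hsa := P.le hB ha'
  have hsc := P.le hB hc'
  have hsb := P.le hC hb'
  have hsd := P.le hC hd'
  have h1 := key a' hsa b' hsb hab
  have h2 := key b' hsb c' hsc hbc
  have h3 := key c' hsc d' hsd hcd
  rw [hP a' b' c' d' h1 h2 h3 B hB C hC ha' hc' hb' hd']

end NCAux

namespace NCAux

/-- The type of noncrossing partitions of `s`. -/
def NCP (s : Finset ℕ) := {P : Finpartition s // IsNoncrossing P}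

instance (s : Finset ℕ) : Finite (NCP s) := by
  unfold NCP; infer_instance

lemma image_up (m c : ℕ) : (Finset.Icc 1 m).image (· + c) = Finset.Icc (1 + c) (m + c) := by
  ext x
  simp only [mem_image, mem_Icc]
  constructor
  · rintro ⟨y, hy, rfl⟩; omega
  · intro hx; exact ⟨x - c, by omega, by omega⟩

lemma image_down (m c : ℕ) : (Finset.Icc (1 + c) (m + c)).image (· - c) = Finset.Icc 1 m := by
  ext x
  simp only [mem_image, mem_Icc]
  constructor
  · rintro ⟨y, hy, rfl⟩; omega
  · intro hx; exact ⟨x + c, by omega, by omega⟩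

/-- Shifting noncrossing partitions up by `c`. -/
noncomputable def shiftEquiv (m c : ℕ) :
    NCP (Finset.Icc 1 m) ≃ NCP (Finset.Icc (1 + c) (m + c)) where
  toFun P := ⟨(mapFun P.1 (· + c)
      (by intro x hx y hy h; have h' : x + c = y + c := h; omega)).copy (image_up m c),
    isNoncrossing_copy _ (isNoncrossing_mapFun
      (by intro x hx y hy hlt; show x + c < y + c; omega) P.2)⟩
  invFun P := ⟨(mapFun P.1 (· - c)
      (by intro x hx y hy h; have h' : x - c = y - c := h
          simp only [mem_Icc] at hx hy; omega)).copy (image_down m c),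
    isNoncrossing_copy _ (isNoncrossing_mapFun
      (by intro x hx y hy hlt; simp only [mem_Icc] at hx hy; show x - c < y - c; omega) P.2)⟩
  left_inv P := by
    apply Subtype.ext
    apply Finpartition.ext
    show ((P.1.parts.image (·.image (· + c))).image (·.image (· - c))) = P.1.parts
    rw [Finset.image_image]
    conv_rhs => rw [← Finset.image_id (s := P.1.parts)]
    apply Finset.image_congr
    intro B hB
    simp only [Function.comp_apply, id_eq, Finset.image_image]
    conv_rhs => rw [← Finset.image_id (s := B)]
    apply Finset.image_congr
    intro x hx
    simp only [Function.comp_apply, id_eq]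
    have hx' := P.1.le hB hx
    simp only [mem_Icc] at hx'
    omega
  right_inv P := by
    apply Subtype.ext
    apply Finpartition.ext
    show ((P.1.parts.image (·.image (· - c))).image (·.image (· + c))) = P.1.parts
    rw [Finset.image_image]
    conv_rhs => rw [← Finset.image_id (s := P.1.parts)]
    apply Finset.image_congr
    intro B hB
    simp only [Function.comp_apply, id_eq, Finset.image_image]
    conv_rhs => rw [← Finset.image_id (s := B)]
    apply Finset.image_congr
    intro x hx
    simp only [Function.comp_apply, id_eq]
    have hx' := P.1.le hB hx
    simp only [mem_Icc] at hx'
    omega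

end NCAux

namespace NCAux

variable {n : ℕ}

lemma one_mem_gnd : (1 : ℕ) ∈ Finset.Icc 1 (n + 1) := by simp

/-- The minimum of the block of `1` minus `1` itself, or `n+2` if `1` is a singleton block. -/
def jval (P : Finpartition (Finset.Icc 1 (n + 1))) : ℕ :=
  if h : (P.part 1).erase 1 = ∅ then n + 2
  else ((P.part 1).erase 1).min' (nonempty_iff_ne_empty.2 h)

lemma part_one_subset {P : Finpartition (Finset.Icc 1 (n + 1))} :
    P.part 1 ⊆ Finset.Icc 1 (n + 1) := P.le (P.part_mem.2 one_mem_gnd)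

lemma jval_spec {P : Finpartition (Finset.Icc 1 (n + 1))} (h : (P.part 1).erase 1 ≠ ∅) :
    jval P ∈ (P.part 1).erase 1 ∧ ∀ x ∈ (P.part 1).erase 1, jval P ≤ x := by
  rw [jval, dif_neg h]
  exact ⟨min'_mem _ _, fun x hx => min'_le _ x hx⟩

lemma jval_bounds {P : Finpartition (Finset.Icc 1 (n + 1))} :
    2 ≤ jval P ∧ jval P ≤ n + 2 := by
  by_cases h : (P.part 1).erase 1 = ∅
  · rw [jval, dif_pos h]; omega
  · obtain ⟨hm, -⟩ := jval_spec h
    rw [mem_erase] at hm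
    have := part_one_subset hm.2
    rw [mem_Icc] at this
    omega

lemma jval_eq_top {P : Finpartition (Finset.Icc 1 (n + 1))} (h : (P.part 1).erase 1 = ∅) :
    jval P = n + 2 := by rw [jval, dif_pos h]

lemma jval_le_iff {P : Finpartition (Finset.Icc 1 (n + 1))} :
    jval P ≤ n + 1 ↔ (P.part 1).erase 1 ≠ ∅ := by
  constructor
  · intro h hc
    rw [jval_eq_top hc] at h; omega
  · intro h
    obtain ⟨hm, -⟩ := jval_spec h
    rw [mem_erase] at hm
    have := part_one_subset hm.2
    rw [mem_Icc] at this
    omega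

lemma dichotomy {P : Finpartition (Finset.Icc 1 (n + 1))} (hP : IsNoncrossing P) :
    ∀ X ∈ (erasePoint P 1).parts,
      X ⊆ Finset.Icc 2 (jval P - 1) ∨ X ⊆ Finset.Icc (jval P) (n + 1) := by
  intro X hX
  obtain ⟨hXne, B, hB, rfl⟩ := mem_erasePoint.1 hX
  by_cases hB1 : B = P.part 1
  · subst hB1
    right
    intro x hx
    rw [mem_erase] at hx
    have hxb := part_one_subset hx.2
    rw [mem_Icc] at hxb ⊢
    have h2 := (jval_spec hXne).2 x (mem_erase.2 hx)
    omega
  · have h1B : (1 : ℕ) ∉ B := fun h => hB1 ((P.part_eq_of_mem hB h).symm)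
    rw [erase_eq_of_notMem h1B] at hXne ⊢
    have hBsub : ∀ y ∈ B, 2 ≤ y ∧ y ≤ n + 1 := by
      intro y hy
      have h1 := P.le hB hy
      rw [mem_Icc] at h1
      have h2 : y ≠ 1 := fun h => h1B (h ▸ hy)
      omega
    by_cases hex : ∃ x ∈ B, jval P ≤ x
    · right
      intro y hy
      obtain ⟨hy2, hyn⟩ := hBsub y hy
      rw [mem_Icc]
      refine ⟨?_, hyn⟩
      by_contra hcon
      push_neg at hcon
      obtain ⟨x, hxB, hjx⟩ := hex
      have hxn := (hBsub x hxB).2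
      have hne : (P.part 1).erase 1 ≠ ∅ := jval_le_iff.1 (by omega)
      obtain ⟨hjm, -⟩ := jval_spec hne
      rw [mem_erase] at hjm
      have hxj : x ≠ jval P := by
        intro h
        exact hB1 (P.eq_of_mem_parts hB (P.part_mem.2 one_mem_gnd) hxB (h ▸ hjm.2))
      exact hB1 (hP 1 y (jval P) x (by omega) (by omega) (by omega)
        (P.part 1) (P.part_mem.2 one_mem_gnd) B hB (P.mem_part one_mem_gnd) hjm.2 hy hxB).symm
    · left
      push_neg at hex
      intro y hy
      obtain ⟨hy2, hyn⟩ := hBsub y hy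
      have h3 := hex y hy
      rw [mem_Icc]
      have h2j := (jval_bounds (P := P)).1
      omega

end NCAux

namespace NCAux

variable {n : ℕ}

/-- The part of the decomposition strictly between `1` and `jval P`. -/
def Qof {P : Finpartition (Finset.Icc 1 (n + 1))} (hP : IsNoncrossing P) :
    Finpartition (Finset.Icc 2 (jval P - 1)) :=
  restrict (erasePoint P 1) _
    (by
      intro x hx
      rw [mem_Icc] at hx
      have hj := jval_bounds (P := P)
      rw [mem_erase, mem_Icc]
      omega)
    (by
      intro B hB
      rcases dichotomy hP B hB with h | h
      · exact Or.inl h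
      · refine Or.inr (Finset.disjoint_left.2 fun x hx hx' => ?_)
        have h1 := h hx
        rw [mem_Icc] at h1 hx'
        omega)

/-- The part of the decomposition weakly above `jval P`. -/
def Rof {P : Finpartition (Finset.Icc 1 (n + 1))} (hP : IsNoncrossing P) :
    Finpartition (Finset.Icc (jval P) (n + 1)) :=
  restrict (erasePoint P 1) _
    (by
      intro x hx
      rw [mem_Icc] at hx
      have hj := jval_bounds (P := P)
      rw [mem_erase, mem_Icc]
      omega)
    (by
      intro B hB
      rcases dichotomy hP B hB with h | h
      · refine Or.inr (Finset.disjoint_left.2 fun x hx hx' => ?_)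
        have h1 := h hx
        rw [mem_Icc] at h1 hx'
        have hj := jval_bounds (P := P)
        omega
      · exact Or.inl h)

section Bwd

variable (k : ℕ) (Q : Finpartition (Finset.Icc 2 (k + 1)))
  (R : Finpartition (Finset.Icc (k + 2) (n + 1)))

/-- The parts of the reassembled partition. -/
def bwdParts : Finset (Finset ℕ) :=
  insert (insert 1 (R.part (k + 2))) (Q.parts ∪ R.parts.erase (R.part (k + 2)))

variable {k Q R}

lemma hQle : ∀ B ∈ Q.parts, ∀ x ∈ B, 2 ≤ x ∧ x ≤ k + 1 := by
  intro B hB x hx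
  have := Q.le hB hx
  rwa [mem_Icc] at this

lemma hRle : ∀ B ∈ R.parts, ∀ x ∈ B, k + 2 ≤ x ∧ x ≤ n + 1 := by
  intro B hB x hx
  have := R.le hB hx
  rwa [mem_Icc] at this

lemma hpj : ∀ x ∈ R.part (k + 2), k + 2 ≤ x ∧ x ≤ n + 1 := by
  intro x hx
  have hne : R.part (k + 2) ≠ ∅ := fun h => by simp [h] at hx
  obtain ⟨hm, -⟩ := part_ne_empty_mem R hne
  exact hRle _ hm x hx

lemma hpjmem (h : R.part (k + 2) ≠ ∅) : R.part (k + 2) ∈ R.parts :=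
  (part_ne_empty_mem R h).1

lemma dSQ : ∀ B ∈ Q.parts, Disjoint (insert 1 (R.part (k + 2))) B := by
  intro B hB
  rw [Finset.disjoint_left]
  intro x hx hx'
  have h1 := hQle B hB x hx'
  rcases mem_insert.1 hx with rfl | hx
  · omega
  · have := hpj x hx; omega

lemma dSR : ∀ B ∈ R.parts, B ≠ R.part (k + 2) →
    Disjoint (insert 1 (R.part (k + 2))) B := by
  intro B hB hBne
  rw [Finset.disjoint_left]
  intro x hx hx'
  have h1 := hRle B hB x hx'
  rcases mem_insert.1 hx with rfl | hx
  · omega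
  · have hne : R.part (k + 2) ≠ ∅ := fun h => by simp [h] at hx
    exact Finset.disjoint_left.1
      (R.disjoint (mem_coe.2 (hpjmem hne)) (mem_coe.2 hB) (Ne.symm hBne)) hx hx'

lemma dQR : ∀ B ∈ Q.parts, ∀ C ∈ R.parts, Disjoint B C := by
  intro B hB C hC
  rw [Finset.disjoint_left]
  intro x hx hx'
  have h1 := hQle B hB x hx
  have h2 := hRle C hC x hx'
  omega

variable (k Q R) in
/-- The reassembled partition. -/
def bwd (hk : k ≤ n) : Finpartition (Finset.Icc 1 (n + 1)) :=
  mk' _ (bwdParts k Q R)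
    (by
      intro X hX Y hY hXY
      simp only [bwdParts, coe_insert, Set.mem_insert_iff, coe_union, Set.mem_union, mem_coe,
        mem_erase] at hX hY
      simp only [Function.onFun, id]
      rcases hX with rfl | hX | ⟨hXne, hX⟩
      · rcases hY with rfl | hY | ⟨hYne, hY⟩
        · exact absurd rfl hXY
        · exact dSQ _ hY
        · exact dSR _ hY hYne
      · rcases hY with rfl | hY | ⟨hYne, hY⟩
        · exact (dSQ _ hX).symm
        · exact Q.disjoint (mem_coe.2 hX) (mem_coe.2 hY) hXY
        · exact dQR _ hX _ hY
      · rcases hY with rfl | hY | ⟨hYne, hY⟩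
        · exact (dSR _ hX hXne).symm
        · exact (dQR _ hY _ hX).symm
        · exact R.disjoint (mem_coe.2 hX) (mem_coe.2 hY) hXY)
    (by
      ext x
      simp only [mem_sup, bwdParts, mem_insert, mem_union, mem_erase, id, mem_Icc]
      constructor
      · rintro ⟨X, hX, hx⟩
        rcases hX with rfl | hX | ⟨hXne, hX⟩
        · rcases mem_insert.1 hx with rfl | hx
          · omega
          · have := hpj x hx; omega
        · have := hQle _ hX x hx; omega
        · have := hRle _ hX x hx; omega
      · intro hx
        rcases Nat.lt_or_ge x 2 with h2 | h2
        · refine ⟨_, Or.inl rfl, ?_⟩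
          have : x = 1 := by omega
          subst this
          exact mem_insert_self _ _
        rcases Nat.lt_or_ge x (k + 2) with h3 | h3
        · have hxQ : x ∈ Finset.Icc 2 (k + 1) := by rw [mem_Icc]; omega
          exact ⟨Q.part x, Or.inr (Or.inl (Q.part_mem.2 hxQ)), Q.mem_part hxQ⟩
        · have hxR : x ∈ Finset.Icc (k + 2) (n + 1) := by rw [mem_Icc]; omega
          by_cases hc : R.part x = R.part (k + 2)
          · exact ⟨_, Or.inl rfl, mem_insert_of_mem (hc ▸ R.mem_part hxR)⟩
          · exact ⟨R.part x, Or.inr (Or.inr ⟨hc, R.part_mem.2 hxR⟩), R.mem_part hxR⟩)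
    (by
      simp only [bwdParts, mem_insert, mem_union, mem_erase]
      rintro (h | h | ⟨-, h⟩)
      · have : (1 : ℕ) ∈ (∅ : Finset ℕ) := h ▸ mem_insert_self 1 _
        simp at this
      · exact Q.bot_notMem h
      · exact R.bot_notMem h)

lemma parts_bwd (hk : k ≤ n) : (bwd k Q R hk).parts = bwdParts k Q R := rfl

end Bwd

end NCAux

namespace NCAux

variable {n k : ℕ} {Q : Finpartition (Finset.Icc 2 (k + 1))}
  {R : Finpartition (Finset.Icc (k + 2) (n + 1))}

lemma isNoncrossing_bwd (hk : k ≤ n) (hQ : IsNoncrossing Q) (hR : IsNoncrossing R) :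
    IsNoncrossing (bwd k Q R hk) := by
  intro a b c d hab hbc hcd B₁ hB₁ B₂ hB₂ ha hc hb hd
  simp only [parts_bwd, bwdParts, mem_insert, mem_union, mem_erase] at hB₁ hB₂
  rcases hB₁ with rfl | hB₁ | ⟨hB₁ne, hB₁⟩
  · rcases hB₂ with rfl | hB₂ | ⟨hB₂ne, hB₂⟩
    · rfl
    · -- S vs Q-part
      exfalso
      rcases mem_insert.1 hc with rfl | hc'
      · have := hQle _ hB₂ b hb; omega
      · have h1 := hpj c hc'
        have h2 := hQle _ hB₂ d hd
        omega
    · -- S vs R-part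
      rcases mem_insert.1 hc with rfl | hc'
      · exfalso; have := hRle _ hB₂ b hb; omega
      · have hne : R.part (k + 2) ≠ ∅ := fun h => by simp [h] at hc'
        have hmem := hpjmem hne
        rcases mem_insert.1 ha with rfl | ha'
        · have hjj : (k + 2) ∈ R.part (k + 2) := (part_ne_empty_mem R hne).2
          have hbj : b ≠ k + 2 := fun h =>
            hB₂ne (R.eq_of_mem_parts hB₂ hmem hb (h ▸ hjj))
          have hbb := hRle _ hB₂ b hb
          exact absurd (hR (k + 2) b c d (by omega) hbc hcd _ hmem _ hB₂ hjj hc' hb hd)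
            (Ne.symm hB₂ne)
        · exact absurd (hR a b c d hab hbc hcd _ hmem _ hB₂ ha' hc' hb hd) (Ne.symm hB₂ne)
  · rcases hB₂ with rfl | hB₂ | ⟨hB₂ne, hB₂⟩
    · -- Q-part vs S
      exfalso
      rcases mem_insert.1 hb with rfl | hb'
      · have := hQle _ hB₁ a ha; omega
      · have h1 := hpj b hb'
        have h2 := hQle _ hB₁ c hc
        omega
    · exact hQ a b c d hab hbc hcd _ hB₁ _ hB₂ ha hc hb hd
    · exfalso
      have h1 := hQle _ hB₁ c hc
      have h2 := hRle _ hB₂ b hb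
      omega
  · rcases hB₂ with rfl | hB₂ | ⟨hB₂ne, hB₂⟩
    · -- R-part vs S
      rcases mem_insert.1 hb with rfl | hb'
      · exfalso; have := hRle _ hB₁ a ha; omega
      · rcases mem_insert.1 hd with rfl | hd'
        · exfalso; have := hRle _ hB₁ c hc; omega
        · have hne : R.part (k + 2) ≠ ∅ := fun h => by simp [h] at hb'
          exact absurd (hR a b c d hab hbc hcd _ hB₁ _ (hpjmem hne) ha hc hb' hd') hB₁ne
    · exfalso
      have h1 := hRle _ hB₁ a ha
      have h2 := hQle _ hB₂ b hb
      omega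
    · exact hR a b c d hab hbc hcd _ hB₁ _ hB₂ ha hc hb hd

end NCAux

namespace NCAux

variable {n k : ℕ} {Q : Finpartition (Finset.Icc 2 (k + 1))}
  {R : Finpartition (Finset.Icc (k + 2) (n + 1))}

lemma one_not_mem_partj : (1 : ℕ) ∉ R.part (k + 2) := fun h => by
  have := hpj 1 h; omega

lemma bwd_part_one (hk : k ≤ n) : (bwd k Q R hk).part 1 = insert 1 (R.part (k + 2)) :=
  (bwd k Q R hk).part_eq_of_mem (by rw [parts_bwd]; exact mem_insert_self _ _)
    (mem_insert_self _ _)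

lemma jval_bwd (hk : k ≤ n) : jval (bwd k Q R hk) = k + 2 := by
  have herase : ((bwd k Q R hk).part 1).erase 1 = R.part (k + 2) := by
    rw [bwd_part_one hk, erase_insert one_not_mem_partj]
  by_cases h : R.part (k + 2) = ∅
  · have hkn : k = n := by
      by_contra hkn
      have hmem : k + 2 ∈ Finset.Icc (k + 2) (n + 1) := by rw [mem_Icc]; omega
      have := R.mem_part hmem
      rw [h] at this
      simp at this
    rw [jval_eq_top (by rw [herase, h]), hkn]
  · rw [jval, dif_neg (by rw [herase]; exact h)]
    apply le_antisymm
    · apply min'_le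
      rw [herase]
      exact (part_ne_empty_mem R h).2
    · apply le_min'
      intro y hy
      rw [herase] at hy
      exact (hpj y hy).1

lemma erasePoint_bwd (hk : k ≤ n) :
    (erasePoint (bwd k Q R hk) 1).parts = Q.parts ∪ R.parts := by
  ext X
  rw [mem_erasePoint]
  simp only [parts_bwd, bwdParts, mem_insert, mem_union, mem_erase]
  constructor
  · rintro ⟨hXne, B, hB, rfl⟩
    rcases hB with rfl | hB | ⟨hBne, hB⟩
    · rw [erase_insert one_not_mem_partj] at hXne ⊢
      exact Or.inr ((part_ne_empty_mem R hXne).1)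
    · have h1 : (1 : ℕ) ∉ B := fun h => by have := hQle _ hB 1 h; omega
      rw [erase_eq_of_notMem h1]
      exact Or.inl hB
    · have h1 : (1 : ℕ) ∉ B := fun h => by have := hRle _ hB 1 h; omega
      rw [erase_eq_of_notMem h1]
      exact Or.inr hB
  · rintro (hX | hX)
    · have h1 : (1 : ℕ) ∉ X := fun h => by have := hQle _ hX 1 h; omega
      exact ⟨(Q.nonempty_of_mem_parts hX).ne_empty, X, Or.inr (Or.inl hX),
        erase_eq_of_notMem h1⟩
    · have h1 : (1 : ℕ) ∉ X := fun h => by have := hRle _ hX 1 h; omega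
      refine ⟨(R.nonempty_of_mem_parts hX).ne_empty, ?_⟩
      by_cases hXj : X = R.part (k + 2)
      · exact ⟨insert 1 (R.part (k + 2)), Or.inl rfl,
          by rw [erase_insert one_not_mem_partj, hXj]⟩
      · exact ⟨X, Or.inr (Or.inr ⟨hXj, hX⟩), erase_eq_of_notMem h1⟩

lemma filter_left : (Q.parts ∪ R.parts).filter (· ⊆ Finset.Icc 2 (k + 1)) = Q.parts := by
  ext X
  rw [mem_filter, mem_union]
  constructor
  · rintro ⟨hX | hX, hsub⟩
    · exact hX
    · exfalso
      obtain ⟨x, hx⟩ := R.nonempty_of_mem_parts hX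
      have h1 := hRle _ hX x hx
      have h2 := hsub hx
      rw [mem_Icc] at h2
      omega
  · intro hX
    exact ⟨Or.inl hX, Q.le hX⟩

lemma filter_right : (Q.parts ∪ R.parts).filter (· ⊆ Finset.Icc (k + 2) (n + 1)) = R.parts := by
  ext X
  rw [mem_filter, mem_union]
  constructor
  · rintro ⟨hX | hX, hsub⟩
    · exfalso
      obtain ⟨x, hx⟩ := Q.nonempty_of_mem_parts hX
      have h1 := hQle _ hX x hx
      have h2 := hsub hx
      rw [mem_Icc] at h2
      omega
    · exact hX
  · intro hX
    exact ⟨Or.inr hX, R.le hX⟩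

end NCAux

namespace NCAux

variable {n : ℕ}

lemma part_eq_empty {s : Finset ℕ} (P : Finpartition s) {a : ℕ} (h : a ∉ s) :
    P.part a = ∅ := by simp [Finpartition.part, h]

variable {P : Finpartition (Finset.Icc 1 (n + 1))} (hP : IsNoncrossing P)

lemma mem_Qof {X : Finset ℕ} :
    X ∈ (Qof hP).parts ↔ X ∈ (erasePoint P 1).parts ∧ X ⊆ Finset.Icc 2 (jval P - 1) := by
  unfold Qof; exact mem_restrict

lemma mem_Rof {X : Finset ℕ} :
    X ∈ (Rof hP).parts ↔ X ∈ (erasePoint P 1).parts ∧ X ⊆ Finset.Icc (jval P) (n + 1) := by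
  unfold Rof; exact mem_restrict

lemma Rof_part_jval : (Rof hP).part (jval P) = (P.part 1).erase 1 := by
  by_cases hne : (P.part 1).erase 1 = ∅
  · have hj := jval_eq_top hne
    have hnm : jval P ∉ Finset.Icc (jval P) (n + 1) := by rw [mem_Icc]; omega
    rw [part_eq_empty _ hnm, hne]
  · obtain ⟨hjm, hjle⟩ := jval_spec hne
    have hmemE : (P.part 1).erase 1 ∈ (erasePoint P 1).parts :=
      mem_erasePoint.2 ⟨hne, P.part 1, P.part_mem.2 one_mem_gnd, rfl⟩
    have hsub : (P.part 1).erase 1 ⊆ Finset.Icc (jval P) (n + 1) := by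
      intro x hx
      rw [mem_Icc]
      have h1 := part_one_subset (mem_of_mem_erase hx)
      rw [mem_Icc] at h1
      exact ⟨hjle x hx, h1.2⟩
    exact (Rof hP).part_eq_of_mem (mem_Rof hP |>.2 ⟨hmemE, hsub⟩) hjm

lemma union_erase_eq :
    (Qof hP).parts ∪ (Rof hP).parts.erase ((P.part 1).erase 1) =
      P.parts.erase (P.part 1) := by
  have hj2 : 2 ≤ jval P := jval_bounds.1
  ext X
  rw [mem_union, mem_erase, mem_erase, mem_Qof hP, mem_Rof hP]
  constructor
  · rintro (⟨hXE, hsub⟩ | ⟨hne', hXE, hsub⟩)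
    · obtain ⟨hXne, B, hB, rfl⟩ := mem_erasePoint.1 hXE
      have hB1 : B ≠ P.part 1 := by
        rintro rfl
        obtain ⟨hjm, -⟩ := jval_spec hXne
        have := hsub hjm
        rw [mem_Icc] at this
        omega
      have h1B : (1 : ℕ) ∉ B := fun h => hB1 ((P.part_eq_of_mem hB h).symm)
      rw [erase_eq_of_notMem h1B]
      exact ⟨hB1, hB⟩
    · obtain ⟨hXne, B, hB, rfl⟩ := mem_erasePoint.1 hXE
      have hB1 : B ≠ P.part 1 := fun h => hne' (by rw [h])
      have h1B : (1 : ℕ) ∉ B := fun h => hB1 ((P.part_eq_of_mem hB h).symm)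
      rw [erase_eq_of_notMem h1B]
      exact ⟨hB1, hB⟩
  · rintro ⟨hX1, hX⟩
    have h1X : (1 : ℕ) ∉ X := fun h => hX1 ((P.part_eq_of_mem hX h).symm)
    have hXE : X ∈ (erasePoint P 1).parts :=
      mem_erasePoint.2 ⟨(P.nonempty_of_mem_parts hX).ne_empty, X, hX,
        erase_eq_of_notMem h1X⟩
    rcases dichotomy hP X hXE with h | h
    · exact Or.inl ⟨hXE, h⟩
    · refine Or.inr ⟨?_, hXE, h⟩
      intro hXB1
      have hne : (P.part 1).erase 1 ≠ ∅ := by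
        rw [← hXB1]
        exact (P.nonempty_of_mem_parts hX).ne_empty
      obtain ⟨hjm, -⟩ := jval_spec hne
      have hjX : jval P ∈ X := by rw [hXB1]; exact hjm
      exact hX1 (P.eq_of_mem_parts hX (P.part_mem.2 one_mem_gnd) hjX (mem_of_mem_erase hjm))

lemma bwd_fwd
    (e1 : Finset.Icc 2 (jval P - 1) = Finset.Icc 2 ((jval P - 2) + 1))
    (e2 : Finset.Icc (jval P) (n + 1) = Finset.Icc ((jval P - 2) + 2) (n + 1))
    (hk : jval P - 2 ≤ n) :
    bwd (jval P - 2) ((Qof hP).copy e1) ((Rof hP).copy e2) hk = P := by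
  have hj2 : 2 ≤ jval P := jval_bounds.1
  have hje : jval P - 2 + 2 = jval P := by omega
  apply Finpartition.ext
  rw [parts_bwd]
  unfold bwdParts
  have hRpart : ((Rof hP).copy e2).part (jval P - 2 + 2) = (Rof hP).part (jval P) := by
    rw [part_copy, hje]
  have hQparts : ((Qof hP).copy e1).parts = (Qof hP).parts := rfl
  have hRparts : ((Rof hP).copy e2).parts = (Rof hP).parts := rfl
  rw [hRpart, hQparts, hRparts, Rof_part_jval hP, union_erase_eq hP,
    insert_erase (P.mem_part one_mem_gnd), insert_erase (P.part_mem.2 one_mem_gnd)]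

end NCAux

namespace NCAux

variable {n : ℕ}

noncomputable instance (s : Finset ℕ) : Fintype (NCP s) := Fintype.ofFinite _

lemma isNoncrossing_Qof {P : Finpartition (Finset.Icc 1 (n + 1))} (hP : IsNoncrossing P) :
    IsNoncrossing (Qof hP) := by
  unfold Qof; exact isNoncrossing_restrict (isNoncrossing_erasePoint hP)

lemma isNoncrossing_Rof {P : Finpartition (Finset.Icc 1 (n + 1))} (hP : IsNoncrossing P) :
    IsNoncrossing (Rof hP) := by
  unfold Rof; exact isNoncrossing_restrict (isNoncrossing_erasePoint hP)

/-- The reassembling map, with noncrossing proofs. -/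
def bwdNC (x : Σ k : Fin (n + 1),
    NCP (Finset.Icc 2 ((k : ℕ) + 1)) × NCP (Finset.Icc ((k : ℕ) + 2) (n + 1))) :
    NCP (Finset.Icc 1 (n + 1)) :=
  ⟨bwd x.1 x.2.1.1 x.2.2.1 x.1.is_le, isNoncrossing_bwd x.1.is_le x.2.1.2 x.2.2.2⟩

/-- The decomposition map. -/
def fwdNC (P : NCP (Finset.Icc 1 (n + 1))) : Σ k : Fin (n + 1),
    NCP (Finset.Icc 2 ((k : ℕ) + 1)) × NCP (Finset.Icc ((k : ℕ) + 2) (n + 1)) :=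
  ⟨⟨jval P.1 - 2, by have := jval_bounds (P := P.1); omega⟩,
    ⟨(Qof P.2).copy (by rw [show jval P.1 - 2 + 1 = jval P.1 - 1 from by
        have := jval_bounds (P := P.1); omega]),
      isNoncrossing_copy _ (isNoncrossing_Qof P.2)⟩,
    ⟨(Rof P.2).copy (by rw [show jval P.1 - 2 + 2 = jval P.1 from by
        have := jval_bounds (P := P.1); omega]),
      isNoncrossing_copy _ (isNoncrossing_Rof P.2)⟩⟩

lemma bwdNC_fwdNC (P : NCP (Finset.Icc 1 (n + 1))) : bwdNC (fwdNC P) = P := by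
  have hj := jval_bounds (P := P.1)
  exact Subtype.ext (bwd_fwd P.2
    (by rw [show jval P.1 - 2 + 1 = jval P.1 - 1 from by omega])
    (by rw [show jval P.1 - 2 + 2 = jval P.1 from by omega])
    (by omega))

lemma bwdNC_injective : Function.Injective (bwdNC (n := n)) := by
  rintro ⟨k, ⟨Q, hQ⟩, ⟨R, hR⟩⟩ ⟨k', ⟨Q', hQ'⟩, ⟨R', hR'⟩⟩ h
  have hparts : bwd k Q R k.is_le = bwd k' Q' R' k'.is_le := congrArg Subtype.val h
  have hkk : k = k' := by
    apply Fin.ext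
    have h1 := jval_bwd (Q := Q) (R := R) k.is_le
    have h2 := jval_bwd (Q := Q') (R := R') k'.is_le
    rw [hparts] at h1
    omega
  subst hkk
  have hE : Q.parts ∪ R.parts = Q'.parts ∪ R'.parts := by
    rw [← erasePoint_bwd (Q := Q) (R := R) k.is_le,
      ← erasePoint_bwd (Q := Q') (R := R') k.is_le, hparts]
  have hQp : Q.parts = Q'.parts := by
    rw [← filter_left (Q := Q) (R := R), ← filter_left (Q := Q') (R := R'), hE]
  have hRp : R.parts = R'.parts := by
    rw [← filter_right (Q := Q) (R := R), ← filter_right (Q := Q') (R := R'), hE]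
  have : Q = Q' := Finpartition.ext hQp
  subst this
  have : R = R' := Finpartition.ext hRp
  subst this
  rfl

lemma fwdNC_bijective : Function.Bijective (fwdNC (n := n)) := by
  constructor
  · intro a b h
    rw [← bwdNC_fwdNC a, ← bwdNC_fwdNC b, h]
  · intro x
    exact ⟨bwdNC x, bwdNC_injective (by rw [bwdNC_fwdNC])⟩

lemma card_succ (n : ℕ) : Nat.card (NCP (Finset.Icc 1 (n + 1))) =
    ∑ k : Fin (n + 1),
      Nat.card (NCP (Finset.Icc 2 ((k : ℕ) + 1))) *
        Nat.card (NCP (Finset.Icc ((k : ℕ) + 2) (n + 1))) := by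
  rw [Nat.card_congr (Equiv.ofBijective _ fwdNC_bijective)]
  rw [Nat.card_eq_fintype_card, Fintype.card_sigma]
  apply Finset.sum_congr rfl
  intro k _
  rw [Fintype.card_prod, Nat.card_eq_fintype_card, Nat.card_eq_fintype_card]

lemma card_left (k : ℕ) :
    Nat.card (NCP (Finset.Icc 2 (k + 1))) = Nat.card (NCP (Finset.Icc 1 k)) := by
  have h := Nat.card_congr (shiftEquiv k 1)
  rw [show 1 + 1 = 2 from rfl] at h
  exact h.symm

lemma card_right {k : ℕ} (hk : k ≤ n) :
    Nat.card (NCP (Finset.Icc (k + 2) (n + 1))) = Nat.card (NCP (Finset.Icc 1 (n - k))) := by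
  have h := Nat.card_congr (shiftEquiv (n - k) (k + 1))
  have e1 : 1 + (k + 1) = k + 2 := by omega
  have e2 : n - k + (k + 1) = n + 1 := by omega
  rw [e1, e2] at h
  rw [← h]

lemma card_eq_catalan (n : ℕ) : Nat.card (NCP (Finset.Icc 1 n)) = catalan n := by
  induction n using Nat.strong_induction_on with
  | _ n ih =>
    match n with
    | 0 =>
      rw [catalan_zero]
      rw [show (Finset.Icc 1 0 : Finset ℕ) = ∅ from Finset.Icc_eq_empty (by omega)]
      rw [Nat.card_eq_one_iff_unique]
      constructor
      · constructor
        intro a b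
        apply Subtype.ext
        apply Finpartition.ext
        have hap : (a.1).parts = ∅ := Finpartition.parts_eq_empty_iff.mpr rfl
        have hbp : (b.1).parts = ∅ := Finpartition.parts_eq_empty_iff.mpr rfl
        rw [hap, hbp]
      · refine ⟨⟨⟨∅, by simp, by simp, by simp⟩, ?_⟩⟩
        intro a b c d _ _ _ B₁ hB₁
        simp at hB₁
    | m + 1 =>
      rw [card_succ, catalan_succ]
      apply Finset.sum_congr rfl
      intro k _
      rw [card_left, card_right k.is_le, ih _ (by omega), ih _ (by have := k.is_le; omega)]

end NCAux

/-- For every natural number `n`, the number of noncrossing partitions of `{1,…,n}` equals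
the Catalan number `C_n = (1/(2n+1))·C(2n+1, n)`. -/
theorem catalan_counts_noncrossing_partitions (n : ℕ) :
    Nat.card {P : Finpartition (Finset.Icc 1 n) // IsNoncrossing P} =
      (2 * n + 1).choose n / (2 * n + 1) := by
  have h1 : Nat.card {P : Finpartition (Finset.Icc 1 n) // IsNoncrossing P} = catalan n :=
    NCAux.card_eq_catalan n
  rw [h1]
  have key : (2 * n + 1).choose n = (2 * n + 1) * catalan n := by
    have h2 := Nat.add_one_mul_choose_eq (2 * n) n
    have h3 := Nat.choose_symm_half n
    have h4 := succ_mul_catalan_eq_centralBinom n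
    have h5 := Nat.centralBinom_eq_two_mul_choose n
    have hmain : (2 * n + 1).choose n * (n + 1) = ((2 * n + 1) * catalan n) * (n + 1) := by
      calc (2 * n + 1).choose n * (n + 1) = (2 * n + 1).choose (n + 1) * (n + 1) := by rw [h3]
        _ = (2 * n + 1) * (2 * n).choose n := h2.symm
        _ = (2 * n + 1) * ((n + 1) * catalan n) := by rw [← h5, ← h4]
        _ = ((2 * n + 1) * catalan n) * (n + 1) := by ring
    exact Nat.eq_of_mul_eq_mul_right (by omega) hmain
  rw [key, Nat.mul_div_cancel_left _ (by omega)]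
end
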